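/- arXiv:2112.08705 — 5 statements merged into one kernel-verified Lean document; each statement's English description precedes it below -/
import Mathlib

section
/- Let K be a finite field, let b ≥ 1, and let f, g ∈ K[X] be polynomials each of natural degree exactly b. Then the kernels of the linear maps Φ_f and Φ_g have trivial intersection (ker Φ_f ⊓ ker Φ_g = ⊥ as submodules of Fin (2b) → K) if and only if f and g are coprime (IsCoprime f g). -/
open Polynomial Finset


/-- The linear map determined by the linear recurring sequence with feedback
polynomial `p` (of natural degree at most `b`):
`(Phi b p x) i = ∑_{j=0}^{b} (coeff of X^j in p) * x (i + j)`. -/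
noncomputable def Phi {K : Type*} [Field K] (b : ℕ) (p : Polynomial K) :
    (Fin (2 * b) → K) →ₗ[K] (Fin b → K) where
  toFun x i := ∑ j : Fin (b + 1),
    p.coeff j * x ⟨i.1 + j.1, by have h1 := i.2; have h2 := j.2; omega⟩
  map_add' x y := by
    funext i
    simp [mul_add, Finset.sum_add_distrib]
  map_smul' c x := by
    funext i
    simp only [Pi.smul_apply, smul_eq_mul, RingHom.id_apply, Finset.mul_sum]
    exact Finset.sum_congr rfl fun j _ => by ring

lemma phi_eq_L {K : Type*} [Field K] {b : ℕ} (p : Polynomial K) (hp : p.natDegree ≤ b)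
    (x : Fin (2*b) → K) (i : Fin b) :
    Phi b p x i = ∑ k : Fin (2*b), (p * X^(i:ℕ)).coeff k * x k := by
  have hi := i.2
  set e : Fin (b+1) → Fin (2*b) := fun j => ⟨i.1 + j.1, by omega⟩ with he
  have hinj : Function.Injective e := by
    intro a b hab
    simp only [he, Fin.mk.injEq] at hab
    exact Fin.ext (by omega)
  have h1 : ∑ k : Fin (2*b), (p * X^(i:ℕ)).coeff k * x k
      = ∑ k ∈ Finset.image e Finset.univ, (p * X^(i:ℕ)).coeff k * x k := by
    refine (Finset.sum_subset (Finset.subset_univ _) ?_).symm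
    intro k _ hk
    have : ¬ ((i:ℕ) ≤ (k:ℕ) ∧ (k:ℕ) - i ≤ b) := by
      intro ⟨h1, h2⟩
      exact hk (Finset.mem_image.2 ⟨⟨(k:ℕ) - i, by omega⟩, Finset.mem_univ _,
        Fin.ext (by simp [he]; omega)⟩)
    rw [coeff_mul_X_pow']
    by_cases hik : (i:ℕ) ≤ (k:ℕ)
    · have : b < (k:ℕ) - i := by omega
      rw [if_pos hik, coeff_eq_zero_of_natDegree_lt (by omega), zero_mul]
    · rw [if_neg hik, zero_mul]
  have h0 : Phi b p x i = ∑ j : Fin (b + 1),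
      p.coeff j * x ⟨i.1 + j.1, by have := i.2; have := j.2; omega⟩ := rfl
  rw [h0, h1, Finset.sum_image (fun a _ c _ h => hinj h)]
  refine Finset.sum_congr rfl fun j _ => ?_
  rw [coeff_mul_X_pow']
  have : (i:ℕ) ≤ ((e j : Fin (2*b)) : ℕ) := by simp [he]
  rw [if_pos this]
  congr 1
  congr 1
  simp [he]

/-- The "dual pairing" sum vanishes on low-degree multiples of `p` when
`x` is in the kernel. -/
lemma L_mul_eq_zero {K : Type*} [Field K] {b : ℕ} (p : Polynomial K)
    (hp : p.natDegree ≤ b) (x : Fin (2*b) → K) (hx : Phi b p x = 0)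
    (u : Polynomial K) (hu : u.natDegree < b) :
    ∑ k : Fin (2*b), (u * p).coeff k * x k = 0 := by
  conv_lhs => rw [u.as_sum_range' b hu, Finset.sum_mul]
  have hco : ∀ k : Fin (2*b),
      (∑ i ∈ Finset.range b, monomial i (u.coeff i) * p).coeff k
      = ∑ i ∈ Finset.range b, u.coeff i * (p * X^i).coeff k := by
    intro k
    rw [Polynomial.finset_sum_coeff]
    refine Finset.sum_congr rfl fun i _ => ?_
    rw [show monomial i (u.coeff i) * p = C (u.coeff i) * (p * X^i) by
      rw [← C_mul_X_pow_eq_monomial]; ring, coeff_C_mul]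
  simp_rw [hco, Finset.sum_mul]
  rw [Finset.sum_comm]
  refine Finset.sum_eq_zero fun i hi => ?_
  have hib : i < b := Finset.mem_range.1 hi
  have : ∑ k : Fin (2*b), u.coeff i * (p * X^i).coeff k * x k
      = u.coeff i * Phi b p x ⟨i, hib⟩ := by
    rw [phi_eq_L p hp x ⟨i, hib⟩, Finset.mul_sum]
    exact Finset.sum_congr rfl fun k _ => by ring
  rw [this, hx]
  simp

/-- The kernels of the LRS linear maps of `f` and `g` (both of natural degree
exactly `b ≥ 1` over a finite field `K`) have trivial intersection iff
`f` and `g` are coprime. -/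
theorem lrs_kernels_trivial_inter_iff_isCoprime
    {K : Type*} [Field K] [Fintype K] (b : ℕ) (hb : 1 ≤ b)
    (f g : Polynomial K) (hf : f.natDegree = b) (hg : g.natDegree = b) :
    LinearMap.ker (Phi b f) ⊓ LinearMap.ker (Phi b g) = ⊥ ↔ IsCoprime f g := by
  have hf0 : f ≠ 0 := fun h0 => by rw [h0, natDegree_zero] at hf; omega
  have hg0 : g ≠ 0 := fun h0 => by rw [h0, natDegree_zero] at hg; omega
  constructor
  · -- trivial intersection → coprime, by contraposition
    intro h
    by_contra hnc
    classical
    set d0 : Polynomial K := EuclideanDomain.gcd f g with hd0def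
    have hd00 : d0 ≠ 0 := fun h0 =>
      hf0 (EuclideanDomain.gcd_eq_zero_iff.1 h0).1
    have hd0u : ¬ IsUnit d0 := fun hu => hnc (EuclideanDomain.gcd_isUnit_iff.1 hu)
    set d : Polynomial K := d0 * C d0.leadingCoeff⁻¹ with hddef
    have hdM : d.Monic := monic_mul_leadingCoeff_inv hd00
    have hunit : IsUnit (C d0.leadingCoeff⁻¹) :=
      isUnit_C.2 (isUnit_iff_ne_zero.2 (inv_ne_zero (leadingCoeff_ne_zero.2 hd00)))
    have hdf : d ∣ f := (hunit.mul_right_dvd).2 (EuclideanDomain.gcd_dvd_left f g)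
    have hdg : d ∣ g := (hunit.mul_right_dvd).2 (EuclideanDomain.gcd_dvd_right f g)
    set m : ℕ := d.natDegree with hmdef
    have hm1 : 1 ≤ m := by
      by_contra hm
      have : d.natDegree = 0 := by omega
      obtain ⟨a, ha⟩ := natDegree_eq_zero.1 this
      have ha0 : a ≠ 0 := fun h0 => hdM.ne_zero (by rw [← ha, h0, map_zero])
      have : IsUnit d := ha ▸ isUnit_C.2 (isUnit_iff_ne_zero.2 ha0)
      exact hd0u (isUnit_of_mul_isUnit_left (hddef ▸ this))
    have hmb : m ≤ b := hf ▸ natDegree_le_of_dvd hdf hf0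
    -- The witness sequence
    set x : Fin (2*b) → K := fun k => ((X:Polynomial K)^(k:ℕ) %ₘ d).coeff (m-1) with hxdef
    have hker : ∀ p : Polynomial K, p.natDegree = b → d ∣ p → Phi b p x = 0 := by
      intro p hp hdp
      funext i
      have h0 : Phi b p x i = ∑ j : Fin (b + 1),
          p.coeff j * x ⟨i.1 + j.1, by have := i.2; have := j.2; omega⟩ := rfl
      rw [h0]
      have hsum : ∀ j : Fin (b+1),
          p.coeff j * x ⟨i.1 + j.1, by have := i.2; have := j.2; omega⟩
          = ((C (p.coeff j) * X^((i:ℕ)+(j:ℕ))) %ₘ d).coeff (m-1) := by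
        intro j
        rw [show (C (p.coeff j) * X^((i:ℕ)+(j:ℕ))) = p.coeff j • ((X:Polynomial K)^((i:ℕ)+(j:ℕ))) by
          rw [smul_eq_C_mul], smul_modByMonic]
        simp [hxdef]
      simp_rw [hsum]
      have : ∑ j : Fin (b+1), ((C (p.coeff j) * X^((i:ℕ)+(j:ℕ))) %ₘ d).coeff (m-1)
          = ((∑ j : Fin (b+1), C (p.coeff j) * X^((i:ℕ)+(j:ℕ))) %ₘ d).coeff (m-1) := by
        rw [show (∑ j : Fin (b+1), C (p.coeff j) * X^((i:ℕ)+(j:ℕ))) %ₘ d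
            = ∑ j : Fin (b+1), ((C (p.coeff j) * X^((i:ℕ)+(j:ℕ))) %ₘ d) from
          map_sum (modByMonicHom d) _ _, Polynomial.finset_sum_coeff]
      rw [this]
      have hXp : ∑ j : Fin (b+1), C (p.coeff j) * X^((i:ℕ)+(j:ℕ)) = X^(i:ℕ) * p := by
        conv_rhs => rw [p.as_sum_range' (b+1) (by omega), Finset.mul_sum]
        rw [← Fin.sum_univ_eq_sum_range (fun j => (X:Polynomial K)^(i:ℕ) * monomial j (p.coeff j))]
        refine Finset.sum_congr rfl fun j _ => ?_
        rw [← C_mul_X_pow_eq_monomial, pow_add]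
        ring
      rw [hXp, (modByMonic_eq_zero_iff_dvd hdM).2 (hdp.trans (dvd_mul_left p _) |>.trans
        (dvd_refl _))]
      · simp
    have hxmem : x ∈ LinearMap.ker (Phi b f) ⊓ LinearMap.ker (Phi b g) :=
      Submodule.mem_inf.2 ⟨LinearMap.mem_ker.2 (hker f hf hdf),
        LinearMap.mem_ker.2 (hker g hg hdg)⟩
    have hx0 : x = 0 := (Submodule.eq_bot_iff _).1 h x hxmem
    have hne : x ⟨m-1, by omega⟩ = 1 := by
      have hdm : ((X:Polynomial K)^(m-1)) %ₘ d = X^(m-1) := by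
        rw [modByMonic_eq_self_iff hdM, degree_X_pow, degree_eq_natDegree hdM.ne_zero]
        exact_mod_cast (by omega : m - 1 < m)
      simp [hxdef, hdm, coeff_X_pow]
    rw [hx0] at hne
    simp at hne
  · -- coprime → trivial intersection
    intro hc
    rw [Submodule.eq_bot_iff]
    intro x hx
    obtain ⟨hx1, hx2⟩ := Submodule.mem_inf.1 hx
    rw [LinearMap.mem_ker] at hx1 hx2
    obtain ⟨a, c, hac⟩ := hc
    set g₁ : Polynomial K := g * C g.leadingCoeff⁻¹ with hg₁def
    have hg₁M : g₁.Monic := monic_mul_leadingCoeff_inv hg0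
    have hg₁deg : g₁.natDegree = b := by
      rw [hg₁def, natDegree_mul hg0 (fun h0 => by
        simp [inv_eq_zero, leadingCoeff_eq_zero, hg0] at h0), natDegree_C, hg]
      omega
    funext k
    show x k = 0
    set r : Polynomial K := (X^(k:ℕ) * a) %ₘ g₁ with hrdef
    set q : Polynomial K := (X^(k:ℕ) * a) /ₘ g₁ with hqdef
    have hqr : r + g₁ * q = X^(k:ℕ) * a := modByMonic_add_div _ g₁
    set s : Polynomial K := C g.leadingCoeff⁻¹ * q * f + X^(k:ℕ) * c with hsdef
    have key : (X:Polynomial K)^(k:ℕ) = r * f + s * g := by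
      rw [hsdef]
      rw [hg₁def] at hqr
      linear_combination (-f) * hqr - (X:Polynomial K)^(k:ℕ) * hac
    have hr : r.natDegree < b := by
      rcases eq_or_ne r 0 with h0 | h0
      · rw [h0, natDegree_zero]; omega
      · rw [natDegree_lt_iff_degree_lt h0]
        calc r.degree < g₁.degree := degree_modByMonic_lt _ hg₁M
          _ = (b : ℕ) := by rw [degree_eq_natDegree hg₁M.ne_zero, hg₁deg]
    have hs : s.natDegree < b := by
      rcases eq_or_ne s 0 with h0 | h0
      · rw [h0, natDegree_zero]; omega
      · have h1 : (s * g).natDegree = s.natDegree + b := by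
          rw [natDegree_mul h0 hg0, hg]
        have h2 : (s * g).natDegree ≤ 2*b - 1 := by
          have : s * g = X^(k:ℕ) - r * f := by linear_combination -key
          rw [this]
          refine le_trans (natDegree_sub_le _ _) ?_
          have hk2 : (k:ℕ) ≤ 2*b - 1 := by have := k.2; omega
          have : (r * f).natDegree ≤ 2*b - 1 := by
            refine le_trans (natDegree_mul_le) ?_
            rw [hf]; omega
          simp only [natDegree_X_pow]
          omega
        omega
    have hxk : x k = ∑ k' : Fin (2*b), ((X:Polynomial K)^(k:ℕ)).coeff k' * x k' := by
      rw [Finset.sum_eq_single k]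
      · simp [coeff_X_pow]
      · intro k' _ hk'
        rw [coeff_X_pow, if_neg (fun h => hk' (Fin.ext h)), zero_mul]
      · intro hk; exact absurd (Finset.mem_univ k) hk
    rw [hxk]
    have : ∀ k' : Fin (2*b), ((X:Polynomial K)^(k:ℕ)).coeff k' * x k'
        = (r * f).coeff k' * x k' + (s * g).coeff k' * x k' := by
      intro k'
      rw [key, coeff_add, add_mul]
    simp_rw [this]
    rw [Finset.sum_add_distrib,
      L_mul_eq_zero f hf.le x hx1 r hr,
      L_mul_eq_zero g hg.le x hx2 s hs, add_zero]
end

section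
/- Let K be a field, let b ≥ 1, and let p ∈ K[X] be a nonzero polynomial with natural degree at most b. Then the linear map Φ_p : (Fin (2b) → K) → (Fin b → K) is surjective; consequently its kernel is a K-subspace of (Fin (2b) → K) of dimension exactly b (Module.finrank K (ker Φ_p) = b). -/
noncomputable def solAux {K : Type*} [Field K] (c : ℕ → K) (d : ℕ) (y : ℕ → K) : ℕ → K
  | n =>
    if _h : n < d then 0
    else (y (n - d) - ∑ j : Fin d, c j * solAux c d y (n - d + j)) / c d
  termination_by n => n
  decreasing_by
    have := j.2; omega

lemma solAux_spec {K : Type*} [Field K] (c : ℕ → K) (d : ℕ) (hc : c d ≠ 0)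
    (y : ℕ → K) (n : ℕ) (hn : d ≤ n) :
    ∑ j ∈ Finset.range (d + 1), c j * solAux c d y (n - d + j) = y (n - d) := by
  rw [Finset.sum_range_succ]
  have hnd : n - d + d = n := by omega
  rw [hnd, solAux, dif_neg (by omega), ← Fin.sum_univ_eq_sum_range
    (fun j => c j * solAux c d y (n - d + j))]
  field_simp
  ring

lemma Phi_surjective {K : Type*} [Field K] (b : ℕ)
    (p : Polynomial K) (hp : p ≠ 0) (hd : p.natDegree ≤ b) :
    Function.Surjective (Phi b p) := by
  intro y
  set d := p.natDegree with hdd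
  set c : ℕ → K := fun j => p.coeff j with hc
  have hcd : c d ≠ 0 := Polynomial.leadingCoeff_ne_zero.mpr hp
  set y' : ℕ → K := fun n => if h : n < b then y ⟨n, h⟩ else 0 with hy'
  refine ⟨fun i => solAux c d y' i.1, ?_⟩
  funext i
  show (∑ j : Fin (b + 1), c j * solAux c d y' (i.1 + j.1)) = y i
  rw [Fin.sum_univ_eq_sum_range (fun j => c j * solAux c d y' (i.1 + j))]
  have hsub : Finset.range (d + 1) ⊆ Finset.range (b + 1) := by
    apply Finset.range_subset_range.mpr; omega
  rw [← Finset.sum_subset hsub (fun j _ hj => by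
    have : p.natDegree < j := by simp at hj ⊢; omega
    simp [hc, Polynomial.coeff_eq_zero_of_natDegree_lt this])]
  have := solAux_spec c d hcd y' (i.1 + d) (by omega)
  simp only [Nat.add_sub_cancel] at this
  rw [this]
  show (if h : i.1 < b then y ⟨i.1, h⟩ else 0) = y i
  rw [dif_pos i.2]

/-- For a nonzero polynomial `p` of natural degree at most `b ≥ 1`, the LRS
linear map `Phi b p` is surjective, and its kernel has dimension exactly `b`. -/
theorem lrs_map_surjective_and_ker_finrank
    {K : Type*} [Field K] (b : ℕ) (hb : 1 ≤ b)
    (p : Polynomial K) (hp : p ≠ 0) (hd : p.natDegree ≤ b) :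
    Function.Surjective (Phi b p) ∧
      Module.finrank K (LinearMap.ker (Phi b p)) = b := by
  have hs := Phi_surjective b p hp hd
  refine ⟨hs, ?_⟩
  have h1 := LinearMap.finrank_range_add_finrank_ker (Phi b p)
  rw [LinearMap.range_eq_top.mpr hs] at h1
  simp [Module.finrank_pi, finrank_top] at h1 ⊢
  omega
end

section
/- Let l, b ≥ 1, let m = l·b, let F = GaloisField 2 l, and let t = 2^{m−1}. Suppose p : Fin t → F[X] is a family of polynomials such that each p i has natural degree exactly b and IsCoprime (p i) (p j) whenever i ≠ j. Define f : (Fin (2b) → F) → ZMod 2 by f(x) = 1 if and only if x ≠ 0 and Φ_{p i}(x) = 0 for some i (and f(x) = 0 otherwise). Then f is bent: for every a : Fin (2b) → F, (W_f(a))² = 2^{2m}. (This is the PS⁻ case of the LRS construction: the support of f is the union of the kernels of the Φ_{p i} minus the origin.) -/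
section AuxSeq

variable {F : Type*} [Field F]

/-- shift operator on sequences -/
noncomputable def shiftL (F : Type*) [Field F] : (ℕ → F) →ₗ[F] (ℕ → F) where
  toFun g n := g (n + 1)
  map_add' _ _ := rfl
  map_smul' _ _ := rfl

lemma shiftL_pow (i : ℕ) (g : ℕ → F) (n : ℕ) : ((shiftL F) ^ i) g n = g (n + i) := by
  induction i generalizing g n with
  | zero => rfl
  | succ k ih =>
    rw [pow_succ]
    show ((shiftL F) ^ k) (shiftL F g) n = _
    rw [ih]; rfl

lemma aeval_shift_apply (r : Polynomial F) (g : ℕ → F) (n : ℕ) :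
    (Polynomial.aeval (shiftL F) r) g n
      = ∑ j : Fin (r.natDegree + 1), r.coeff j * g (n + j) := by
  rw [Polynomial.aeval_eq_sum_range]
  rw [LinearMap.coe_sum, Finset.sum_apply, Finset.sum_apply]
  rw [Fin.sum_univ_eq_sum_range (fun j => r.coeff j * g (n + j))]
  refine Finset.sum_congr rfl fun i _ => ?_
  simp [shiftL_pow]

noncomputable def lrsExt (c : ℕ → F) (b N : ℕ) (hb : 1 ≤ b) (hN : b ≤ N) (y : ℕ → F) : ℕ → F
  | n =>
    if h : n < N then y n
    else (c b)⁻¹ * (- ∑ j : Fin b, c j * lrsExt c b N hb hN y (n - b + j.1))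
  termination_by n => n
  decreasing_by
    have := j.2; omega

lemma lrsExt_of_lt (c : ℕ → F) {b N : ℕ} (hb : 1 ≤ b) (hN : b ≤ N) (y : ℕ → F)
    {n : ℕ} (h : n < N) : lrsExt c b N hb hN y n = y n := by
  rw [lrsExt]; simp [h]

lemma lrsExt_rec (c : ℕ → F) {b N : ℕ} (hb : 1 ≤ b) (hN : b ≤ N) (y : ℕ → F)
    (hcb : c b ≠ 0) {n : ℕ} (h : N ≤ n + b) :
    ∑ j : Fin (b + 1), c j * lrsExt c b N hb hN y (n + j.1) = 0 := by
  have hnb : ¬ (n + b < N) := by omega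
  rw [Fin.sum_univ_castSucc]
  have htop : lrsExt c b N hb hN y (n + b)
      = (c b)⁻¹ * (- ∑ j : Fin b, c j * lrsExt c b N hb hN y (n + b - b + j.1)) := by
    rw [lrsExt]; simp [hnb]
  simp only [Fin.coe_castSucc, Fin.val_last]
  rw [htop]
  have hnn : n + b - b = n := by omega
  rw [hnn]
  field_simp
  ring

lemma zero_of_rec {b : ℕ} (hb : 1 ≤ b) (c : ℕ → F) (hcb : c b ≠ 0) (g : ℕ → F)
    (h0 : ∀ n < b, g n = 0)
    (hrec : ∀ n, ∑ j : Fin (b + 1), c j * g (n + j.1) = 0) :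
    ∀ n, g n = 0 := by
  intro n
  induction n using Nat.strong_induction_on with
  | _ n ih =>
    by_cases h : n < b
    · exact h0 n h
    · have hr := hrec (n - b)
      rw [Fin.sum_univ_castSucc] at hr
      simp only [Fin.coe_castSucc, Fin.val_last] at hr
      have hz : ∀ j : Fin b, c j.1 * g (n - b + j.1) = 0 := by
        intro j
        rw [ih (n - b + j.1) (by have := j.2; omega), mul_zero]
      rw [Finset.sum_eq_zero (fun j _ => hz j), zero_add] at hr
      have hnb : n - b + b = n := by omega
      rw [hnb] at hr
      exact (mul_eq_zero.mp hr).resolve_left hcb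

end AuxSeq

section AuxPhi

variable {F : Type*} [Field F] {b : ℕ}

lemma coeff_b_ne_zero {p : Polynomial F} (hb : 1 ≤ b) (hp : p.natDegree = b) :
    p.coeff b ≠ 0 := by
  have hp0 : p ≠ 0 := by
    intro h; rw [h] at hp; simp at hp; omega
  rw [← hp]
  exact fun h => hp0 (Polynomial.leadingCoeff_eq_zero.mp h)

lemma ext_ker (hb : 1 ≤ b) (p : Polynomial F) (hp : p.natDegree = b)
    (x : Fin (2 * b) → F) (hx : Phi b p x = 0) :
    ∃ g : ℕ → F, (∀ n (h : n < 2 * b), g n = x ⟨n, h⟩)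
      ∧ (Polynomial.aeval (shiftL F) p) g = 0 := by
  have hN : b ≤ 2 * b := by omega
  have hcb : p.coeff b ≠ 0 := coeff_b_ne_zero hb hp
  set xg : ℕ → F := fun n => if h : n < 2 * b then x ⟨n, h⟩ else 0 with hxg
  refine ⟨lrsExt (fun n => p.coeff n) b (2 * b) hb hN xg, fun n h => ?_, ?_⟩
  · rw [lrsExt_of_lt _ hb hN _ h]; simp [hxg, h]
  · funext n
    rw [Pi.zero_apply, aeval_shift_apply, hp]
    by_cases hnb : n < b
    · have hx' := congrFun hx ⟨n, hnb⟩
      simp only [Phi, LinearMap.coe_mk, AddHom.coe_mk, Pi.zero_apply] at hx'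
      rw [← hx']
      refine Finset.sum_congr rfl fun j _ => ?_
      have hlt : n + j.1 < 2 * b := by have := j.2; omega
      rw [lrsExt_of_lt _ hb hN _ hlt]
      simp [hxg, hlt]
    · exact lrsExt_rec _ hb hN _ hcb (by omega)

lemma inter_eq_zero (hb : 1 ≤ b) (p q : Polynomial F)
    (hp : p.natDegree = b) (hq : q.natDegree = b) (hpq : IsCoprime p q)
    (x : Fin (2 * b) → F) (hxp : Phi b p x = 0) (hxq : Phi b q x = 0) :
    x = 0 := by
  obtain ⟨g, hgx, hgp⟩ := ext_ker hb p hp x hxp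
  set S := shiftL F
  set z : ℕ → F := Polynomial.aeval S q g with hz
  have hzp : Polynomial.aeval S p z = 0 := by
    rw [hz, ← Module.End.mul_apply, ← map_mul, mul_comm, map_mul, Module.End.mul_apply,
      hgp, map_zero]
  have hz0 : ∀ n < b, z n = 0 := by
    intro n hn
    rw [hz, aeval_shift_apply, hq]
    have hx' := congrFun hxq ⟨n, hn⟩
    simp only [Phi, LinearMap.coe_mk, AddHom.coe_mk, Pi.zero_apply] at hx'
    rw [← hx']
    refine Finset.sum_congr rfl fun j _ => ?_
    have hlt : n + j.1 < 2 * b := by have := j.2; omega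
    rw [hgx _ hlt]
  have hzrec : ∀ n, ∑ j : Fin (b + 1), p.coeff j * z (n + j.1) = 0 := by
    intro n
    rw [← hp, ← aeval_shift_apply, hzp]
    rfl
  have hzall : ∀ n, z n = 0 :=
    zero_of_rec hb (fun n => p.coeff n) (coeff_b_ne_zero hb hp) z hz0 hzrec
  have hzzero : z = 0 := funext hzall
  obtain ⟨u, v, huv⟩ := hpq
  have hg0 : g = 0 := by
    have h1 : (Polynomial.aeval S (u * p + v * q)) g = g := by
      rw [huv, map_one, Module.End.one_apply]
    rw [map_add, map_mul, map_mul, LinearMap.add_apply, Module.End.mul_apply,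
      Module.End.mul_apply, hgp, ← hz, hzzero, map_zero, map_zero, add_zero] at h1
    exact h1.symm
  funext i
  rw [Pi.zero_apply, ← hgx i.1 i.2, hg0, Pi.zero_apply]

lemma ker_inj (hb : 1 ≤ b) (p : Polynomial F) (hp : p.natDegree = b)
    (x : Fin (2 * b) → F) (hx : Phi b p x = 0)
    (h0 : ∀ j : Fin b, x ⟨j.1, by have := j.2; omega⟩ = 0) : x = 0 := by
  obtain ⟨g, hgx, hgp⟩ := ext_ker hb p hp x hx
  have hrec : ∀ n, ∑ j : Fin (b + 1), p.coeff j * g (n + j.1) = 0 := by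
    intro n
    rw [← hp, ← aeval_shift_apply, hgp]
    rfl
  have hg0 : ∀ n < b, g n = 0 := by
    intro n hn
    rw [hgx n (by omega)]
    exact h0 ⟨n, hn⟩
  have := zero_of_rec hb (fun n => p.coeff n) (coeff_b_ne_zero hb hp) g hg0 hrec
  funext i
  rw [Pi.zero_apply, ← hgx i.1 i.2, this]

lemma ker_surj (hb : 1 ≤ b) (p : Polynomial F) (hp : p.natDegree = b)
    (y : Fin b → F) :
    ∃ x : Fin (2 * b) → F, Phi b p x = 0
      ∧ ∀ j : Fin b, x ⟨j.1, by have := j.2; omega⟩ = y j := by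
  have hcb : p.coeff b ≠ 0 := coeff_b_ne_zero hb hp
  set yg : ℕ → F := fun n => if h : n < b then y ⟨n, h⟩ else 0 with hyg
  set g : ℕ → F := lrsExt (fun n => p.coeff n) b b hb le_rfl yg with hg
  refine ⟨fun i => g i.1, ?_, ?_⟩
  · funext i
    simp only [Phi, LinearMap.coe_mk, AddHom.coe_mk, Pi.zero_apply]
    have := lrsExt_rec (fun n => p.coeff n) hb le_rfl yg hcb
      (n := i.1) (by omega)
    rw [← this]
  · intro j
    have h1 : lrsExt (fun n => p.coeff n) b b hb le_rfl yg j.1 = y j := by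
      rw [lrsExt_of_lt _ hb le_rfl _ j.2]; simp [hyg, j.2]
    exact h1

/-- The restriction-to-first-`b`-coordinates linear map on the kernel. -/
noncomputable def kerRes (hb : 1 ≤ b) (p : Polynomial F) :
    ↥(LinearMap.ker (Phi b p)) →ₗ[F] (Fin b → F) where
  toFun x j := x.1 ⟨j.1, by have := j.2; omega⟩
  map_add' x y := rfl
  map_smul' c x := rfl

lemma kerRes_bijective (hb : 1 ≤ b) (p : Polynomial F) (hp : p.natDegree = b) :
    Function.Bijective (kerRes hb p) := by
  constructor
  · intro x y hxy
    have hsub : (x : Fin (2 * b) → F) - y ∈ LinearMap.ker (Phi b p) :=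
      Submodule.sub_mem _ x.2 y.2
    have h0 : ∀ j : Fin b, ((x : Fin (2 * b) → F) - y) ⟨j.1, by have := j.2; omega⟩ = 0 := by
      intro j
      have := congrFun hxy j
      simp only [kerRes, LinearMap.coe_mk, AddHom.coe_mk] at this
      simp [this]
    have := ker_inj hb p hp _ (LinearMap.mem_ker.mp hsub) h0
    exact Subtype.ext (by rwa [sub_eq_zero] at this)
  · intro y
    obtain ⟨x, hx, hxy⟩ := ker_surj hb p hp y
    exact ⟨⟨x, LinearMap.mem_ker.mpr hx⟩, funext fun j => hxy j⟩

end AuxPhi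

section AuxChi

def chi (c : ZMod 2) : ℤ := if c = 0 then 1 else -1

lemma chi_add_one (c : ZMod 2) : chi (c + 1) = - chi c := by revert c; decide

lemma chi_zero : chi 0 = 1 := rfl

lemma sum_chi_eq_zero {G : Type*} [AddCommGroup G] [Fintype G] (φ : G → ZMod 2)
    (hadd : ∀ x y, φ (x + y) = φ x + φ y) (h : ∃ x, φ x ≠ 0) :
    ∑ x, chi (φ x) = 0 := by
  obtain ⟨x0, hx0⟩ := h
  have h1 : φ x0 = 1 := by revert hx0; generalize φ x0 = c; revert c; decide
  have key : ∑ x, chi (φ (x + x0)) = ∑ x, chi (φ x) :=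
    Fintype.sum_equiv (Equiv.addRight x0) _ _ (fun x => rfl)
  have key2 : ∀ x, chi (φ (x + x0)) = - chi (φ x) := by
    intro x; rw [hadd, h1, chi_add_one]
  rw [Finset.sum_congr rfl (fun x _ => key2 x), Finset.sum_neg_distrib] at key
  linarith

end AuxChi

noncomputable instance (l : ℕ) : Fintype (GaloisField 2 l) := Fintype.ofFinite _

lemma exists_pair_one {l n : ℕ} (a : Fin n → GaloisField 2 l) (ha : a ≠ 0) :
    ∃ x : Fin n → GaloisField 2 l,
      (∑ j, Algebra.trace (ZMod 2) (GaloisField 2 l) (a j * x j)) = 1 := by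
  obtain ⟨j0, hj0⟩ := Function.ne_iff.mp ha
  have hj0' : a j0 ≠ 0 := hj0
  have h := Algebra.trace_ne_zero (ZMod 2) (GaloisField 2 l)
  obtain ⟨w, hw⟩ := DFunLike.ne_iff.mp h
  have hw0 : Algebra.trace (ZMod 2) (GaloisField 2 l) w ≠ 0 := by simpa using hw
  have hw1 : Algebra.trace (ZMod 2) (GaloisField 2 l) w = 1 := by
    revert hw0; generalize (Algebra.trace (ZMod 2) (GaloisField 2 l)) w = c
    revert c; decide
  classical
  refine ⟨Pi.single j0 ((a j0)⁻¹ * w), ?_⟩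
  rw [Finset.sum_eq_single j0]
  · rw [Pi.single_eq_same, ← mul_assoc, mul_inv_cancel₀ hj0', one_mul, hw1]
  · intro j _ hj
    rw [Pi.single_eq_of_ne hj, mul_zero, map_zero]
  · simp

lemma galois_card (l : ℕ) (hl : 1 ≤ l) : Fintype.card (GaloisField 2 l) = 2 ^ l := by
  have := GaloisField.card 2 l (by omega)
  simpa [Nat.card_eq_fintype_card] using this

/-- The PS⁻ case of the LRS construction: given `t = 2^(l*b - 1)` pairwise
coprime polynomials of natural degree exactly `b` over `F = GaloisField 2 l`,
the Boolean function whose support is the union of the kernels of the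
associated LRS linear maps minus the origin is bent: every Walsh–Hadamard
coefficient squares to `2^(2*m)` where `m = l*b`. -/
theorem lrs_psMinus_bent (l b : ℕ) (hl : 1 ≤ l) (hb : 1 ≤ b)
    (p : Fin (2 ^ (l * b - 1)) → Polynomial (GaloisField 2 l))
    (hdeg : ∀ i, (p i).natDegree = b)
    (hcop : ∀ i j, i ≠ j → IsCoprime (p i) (p j))
    (f : (Fin (2 * b) → GaloisField 2 l) → ZMod 2)
    (hf : ∀ x, f x = 1 ↔ (x ≠ 0 ∧ ∃ i, Phi b (p i) x = 0)) :
    ∀ a : Fin (2 * b) → GaloisField 2 l,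
      ((∑ x : Fin (2 * b) → GaloisField 2 l,
          (if f x = 0 then (1 : ℤ) else -1) *
            (if (∑ j, Algebra.trace (ZMod 2) (GaloisField 2 l) (a j * x j)) = 0
              then (1 : ℤ) else -1)) ^ 2) = 2 ^ (2 * (l * b)) := by
  intro a
  classical
  have hm1 : 1 ≤ l * b := Nat.one_le_iff_ne_zero.mpr
    (Nat.mul_ne_zero (by omega) (by omega))
  set Ba : (Fin (2 * b) → GaloisField 2 l) → ZMod 2 :=
    fun x => ∑ j, Algebra.trace (ZMod 2) (GaloisField 2 l) (a j * x j) with hBadef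
  have hBadd : ∀ x y : Fin (2 * b) → GaloisField 2 l, Ba (x + y) = Ba x + Ba y := by
    intro x y
    simp only [hBadef, Pi.add_apply, mul_add, map_add]
    rw [Finset.sum_add_distrib]
  have hBa0 : Ba 0 = 0 := by simp [hBadef]
  -- cardinalities
  have hcardF : Fintype.card (GaloisField 2 l) = 2 ^ l := galois_card l hl
  have hcardV : Fintype.card (Fin (2 * b) → GaloisField 2 l) = 2 ^ (2 * (l * b)) := by
    rw [Fintype.card_fun, hcardF, Fintype.card_fin, ← pow_mul]
    ring_nf
  -- kernels
  set Kf : Fin (2 ^ (l * b - 1)) → Finset (Fin (2 * b) → GaloisField 2 l) := fun i => Finset.univ.filter (fun x => Phi b (p i) x = 0)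
    with hKfdef
  have hmemKf : ∀ i (x : Fin (2 * b) → GaloisField 2 l), x ∈ Kf i ↔ Phi b (p i) x = 0 := by
    intro i x; simp [hKfdef]
  have hker0 : ∀ i, (0 : Fin (2 * b) → GaloisField 2 l) ∈ Kf i := by
    intro i; rw [hmemKf]; exact map_zero _
  have hker_card : ∀ i, (Kf i).card = 2 ^ (l * b) := by
    intro i
    have e1 : ↥(LinearMap.ker (Phi b (p i))) ≃ (Fin b → GaloisField 2 l) :=
      Equiv.ofBijective _ (kerRes_bijective hb (p i) (hdeg i))
    have h1 : Fintype.card ↥(LinearMap.ker (Phi b (p i))) = 2 ^ (l * b) := by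
      rw [Fintype.card_congr e1, Fintype.card_fun, hcardF, Fintype.card_fin, ← pow_mul, (rfl : l * b = l * b)]
    have h2 : Fintype.card {x : Fin (2 * b) → GaloisField 2 l // Phi b (p i) x = 0}
        = Fintype.card ↥(LinearMap.ker (Phi b (p i))) :=
      Fintype.card_congr (Equiv.subtypeEquivRight (fun x => (LinearMap.mem_ker).symm))
    rw [← Fintype.card_subtype, h2, h1]
  have hker_finrank : ∀ i, Module.finrank (GaloisField 2 l) (LinearMap.ker (Phi b (p i))) = b := by
    intro i
    have e1 : ↥(LinearMap.ker (Phi b (p i))) ≃ₗ[GaloisField 2 l] (Fin b → GaloisField 2 l) :=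
      LinearEquiv.ofBijective _ (kerRes_bijective hb (p i) (hdeg i))
    rw [e1.finrank_eq, Module.finrank_pi, Fintype.card_fin]
  have hV_finrank : Module.finrank (GaloisField 2 l) (Fin (2 * b) → GaloisField 2 l) = 2 * b := by
    rw [Module.finrank_pi, Fintype.card_fin]
  have hsup : ∀ i j, i ≠ j →
      LinearMap.ker (Phi b (p i)) ⊔ LinearMap.ker (Phi b (p j)) = ⊤ := by
    intro i j hij
    have hinf : LinearMap.ker (Phi b (p i)) ⊓ LinearMap.ker (Phi b (p j)) = ⊥ := by
      rw [Submodule.eq_bot_iff]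
      intro x hx
      exact inter_eq_zero hb (p i) (p j) (hdeg i) (hdeg j) (hcop i j hij) x
        (LinearMap.mem_ker.mp hx.1) (LinearMap.mem_ker.mp hx.2)
    apply Submodule.eq_top_of_finrank_eq
    have := Submodule.finrank_sup_add_finrank_inf_eq
      (LinearMap.ker (Phi b (p i))) (LinearMap.ker (Phi b (p j)))
    rw [hinf, finrank_bot, add_zero, hker_finrank i, hker_finrank j] at this
    rw [this, hV_finrank]
    omega
  -- the Walsh sum
  have hchi1 : ∀ x : Fin (2 * b) → GaloisField 2 l, (if f x = 0 then (1 : ℤ) else -1) = chi (f x) := fun x => rfl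
  have hchi2 : ∀ x : Fin (2 * b) → GaloisField 2 l, (if (∑ j, Algebra.trace (ZMod 2) (GaloisField 2 l) (a j * x j)) = 0
      then (1 : ℤ) else -1) = chi (Ba x) := fun x => rfl
  have hsplit : ∀ x : Fin (2 * b) → GaloisField 2 l, chi (f x) * chi (Ba x)
      = chi (Ba x) - 2 * (if f x = 1 then chi (Ba x) else 0) := by
    intro x
    have h2 : f x = 0 ∨ f x = 1 := by
      have : ∀ c : ZMod 2, c = 0 ∨ c = 1 := by decide
      exact this (f x)
    rcases h2 with h | h <;> by_cases hB : Ba x = 0 <;> simp [chi, h, hB]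
  set P : Fin (2 ^ (l * b - 1)) → Prop := fun i => ∀ x : Fin (2 * b) → GaloisField 2 l, Phi b (p i) x = 0 → Ba x = 0 with hPdef
  set N := (Finset.univ.filter P).card with hNdef
  have hinner : ∀ i, (∑ x ∈ Kf i, chi (Ba x)) = if P i then ((2 : ℤ) ^ (l * b)) else 0 := by
    intro i
    by_cases hP : P i
    · rw [if_pos hP]
      rw [Finset.sum_congr rfl (fun x hx => by
        rw [hP x ((hmemKf i x).mp hx), chi_zero])]
      rw [Finset.sum_const, hker_card i]
      simp
    · rw [if_neg hP]
      rw [Finset.sum_subtype (Kf i)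
        (fun x => (hmemKf i x).trans (LinearMap.mem_ker).symm) (fun x => chi (Ba x))]
      apply sum_chi_eq_zero (fun x : ↥(LinearMap.ker (Phi b (p i))) => Ba x.1)
      · intro x y
        rw [Submodule.coe_add, hBadd]
      · simp only [hPdef, not_forall] at hP
        obtain ⟨x, hx1, hx2⟩ := hP
        exact ⟨⟨x, LinearMap.mem_ker.mpr hx1⟩, hx2⟩
  -- decompose the support
  have hS : Finset.univ.filter (fun x : Fin (2 * b) → GaloisField 2 l => f x = 1)
      = Finset.univ.biUnion (fun i => (Kf i).erase 0) := by
    ext x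
    simp only [Finset.mem_filter, Finset.mem_univ, true_and, Finset.mem_biUnion,
      Finset.mem_erase, hf, hmemKf]
    tauto
  have hdisj : (↑(Finset.univ : Finset (Fin (2 ^ (l * b - 1)))) : Set (Fin (2 ^ (l * b - 1)))).PairwiseDisjoint
      (fun i => (Kf i).erase 0) := by
    intro i _ j _ hij
    refine Finset.disjoint_left.mpr ?_
    intro x hxi hxj
    rw [Finset.mem_erase, hmemKf] at hxi hxj
    exact hxi.1 (inter_eq_zero hb (p i) (p j) (hdeg i) (hdeg j) (hcop i j hij) x
      hxi.2 hxj.2)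
  have herase : ∀ i, (∑ x ∈ (Kf i).erase 0, chi (Ba x))
      = (∑ x ∈ Kf i, chi (Ba x)) - 1 := by
    intro i
    have := Finset.sum_erase_add (Kf i) (fun x => chi (Ba x)) (hker0 i)
    simp only [hBa0, chi_zero] at this
    linarith
  -- put everything together
  have hW : (∑ x : Fin (2 * b) → GaloisField 2 l, (if f x = 0 then (1 : ℤ) else -1) *
          (if (∑ j, Algebra.trace (ZMod 2) (GaloisField 2 l) (a j * x j)) = 0
            then (1 : ℤ) else -1))
      = (∑ x : Fin (2 * b) → GaloisField 2 l, chi (Ba x))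
        - 2 * ((N : ℤ) * 2 ^ (l * b) - (2 ^ (l * b - 1) : ℕ)) := by
    calc (∑ x : Fin (2 * b) → GaloisField 2 l, (if f x = 0 then (1 : ℤ) else -1) *
          (if (∑ j, Algebra.trace (ZMod 2) (GaloisField 2 l) (a j * x j)) = 0
            then (1 : ℤ) else -1))
        = ∑ x : Fin (2 * b) → GaloisField 2 l,
            (chi (Ba x) - 2 * (if f x = 1 then chi (Ba x) else 0)) :=
          Finset.sum_congr rfl (fun x _ => hsplit x)
      _ = (∑ x : Fin (2 * b) → GaloisField 2 l, chi (Ba x))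
          - 2 * (∑ x : Fin (2 * b) → GaloisField 2 l,
              (if f x = 1 then chi (Ba x) else 0)) := by
          rw [Finset.sum_sub_distrib, ← Finset.mul_sum]
      _ = (∑ x : Fin (2 * b) → GaloisField 2 l, chi (Ba x))
          - 2 * ((N : ℤ) * 2 ^ (l * b) - (2 ^ (l * b - 1) : ℕ)) := by
          congr 1
          rw [← Finset.sum_filter, hS, Finset.sum_biUnion hdisj]
          have hT2 : ∑ i, (∑ x ∈ (Kf i).erase 0, chi (Ba x))
              = ∑ i, ((if P i then ((2 : ℤ) ^ (l * b)) else 0) - 1) :=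
            Finset.sum_congr rfl (fun i _ => by rw [herase i, hinner i])
          rw [hT2]
          rw [Finset.sum_sub_distrib, Finset.sum_const, Finset.card_univ, Fintype.card_fin]
          rw [← Finset.sum_filter, Finset.sum_const, hNdef]
          push_cast
          ring
  have e2 : (2 : ℤ) ^ (l * b) = 2 * 2 ^ (l * b - 1) := by
    conv_lhs => rw [(Nat.succ_pred_eq_of_pos hm1).symm]
    rw [pow_succ', Nat.pred_eq_sub_one]
  have e4 : (2 : ℤ) ^ (2 * (l * b)) = (2 * 2 ^ (l * b - 1)) ^ 2 := by
    rw [two_mul, pow_add, e2]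
    ring
  by_cases ha : a = 0
  · -- a = 0
    have hBaall : ∀ x : Fin (2 * b) → GaloisField 2 l, Ba x = 0 := by
      intro x; simp [hBadef, ha]
    have hA : (∑ x : Fin (2 * b) → GaloisField 2 l, chi (Ba x)) = (2 : ℤ) ^ (2 * (l * b)) := by
      rw [Finset.sum_congr rfl (fun x _ => by rw [hBaall x, chi_zero])]
      rw [Finset.sum_const, Finset.card_univ, hcardV]
      simp
    have hNt : N = 2 ^ (l * b - 1) := by
      rw [hNdef]
      have : Finset.univ.filter P = Finset.univ := by
        refine Finset.filter_true_of_mem ?_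
        intro i _
        exact fun x _ => hBaall x
      rw [this, Finset.card_univ, Fintype.card_fin]
    rw [hW, hA, hNt, e2, e4]
    push_cast
    ring
  · -- a ≠ 0
    have hA : (∑ x : Fin (2 * b) → GaloisField 2 l, chi (Ba x)) = 0 := by
      apply sum_chi_eq_zero Ba hBadd
      obtain ⟨x, hx⟩ := exists_pair_one a ha
      exact ⟨x, by rw [hBadef]; simp only; rw [hx]; exact one_ne_zero⟩
    have hN1 : N ≤ 1 := by
      rw [hNdef]
      refine Finset.card_le_one.mpr ?_
      intro i hi j hj
      by_contra hij
      have hPi : P i := (Finset.mem_filter.mp hi).2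
      have hPj : P j := (Finset.mem_filter.mp hj).2
      have hall : ∀ x : Fin (2 * b) → GaloisField 2 l, Ba x = 0 := by
        intro x
        have hx : x ∈ LinearMap.ker (Phi b (p i)) ⊔ LinearMap.ker (Phi b (p j)) := by
          rw [hsup i j hij]; trivial
        obtain ⟨u, hu, w, hw, rfl⟩ := Submodule.mem_sup.mp hx
        rw [hBadd, hPi u (LinearMap.mem_ker.mp hu), hPj w (LinearMap.mem_ker.mp hw),
          add_zero]
      obtain ⟨x, hx⟩ := exists_pair_one a ha
      have h0 : Ba x = 0 := hall x
      have h1 : Ba x = 1 := hx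
      rw [h0] at h1
      exact one_ne_zero h1.symm
    rw [hW, hA]
    interval_cases N
    · rw [e4, e2]
      push_cast
      ring
    · rw [e4, e2]
      push_cast
      ring
end

section
/- Let l, b ≥ 1, let m = l·b, let F = GaloisField 2 l, and let t = 2^{m−1} + 1. Suppose p : Fin t → F[X] is a family of polynomials such that each p i has natural degree exactly b and IsCoprime (p i) (p j) whenever i ≠ j. Define f : (Fin (2b) → F) → ZMod 2 by f(x) = 1 if and only if Φ_{p i}(x) = 0 for some i (so in particular f(0) = 1), and f(x) = 0 otherwise. Then f is bent: for every a : Fin (2b) → F, (W_f(a))² = 2^{2m}. (This is the PS⁺ case of the LRS construction: the support of f is the union of the kernels of the Φ_{p i}.) -/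
open Polynomial

noncomputable def Px {K : Type*} [Field K] (n : ℕ) (x : Fin n → K) : K[X] :=
  ∑ k : Fin n, C (x k) * X ^ (k : ℕ)

lemma coeff_Px {K : Type*} [Field K] (n : ℕ) (x : Fin n → K) (i : ℕ) :
    (Px n x).coeff i = if h : i < n then x ⟨i, h⟩ else 0 := by
  rw [Px, finset_sum_coeff]
  simp only [coeff_C_mul, coeff_X_pow, mul_ite, mul_one, mul_zero]
  split
  · next h =>
    rw [Finset.sum_eq_single (⟨i, h⟩ : Fin n)]
    · simp
    · intro j _ hj
      simp only [ite_eq_right_iff]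
      intro hij
      exact absurd (Fin.ext hij.symm) hj
    · simp
  · next h =>
    apply Finset.sum_eq_zero
    intro j _
    simp only [ite_eq_right_iff]
    intro hij
    exact absurd (hij ▸ j.2) h

lemma natDegree_Px_le {K : Type*} [Field K] (n : ℕ) (x : Fin n → K) :
    (Px n x).natDegree ≤ n - 1 := by
  rw [natDegree_le_iff_coeff_eq_zero]
  intro N hN
  rw [coeff_Px]
  split
  · omega
  · rfl

lemma coeff_Px_mul_reflect {K : Type*} [Field K] (b : ℕ) (p : K[X]) (hp : p.natDegree ≤ b)
    (x : Fin (2*b) → K) (i : ℕ) (hi : i < b) :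
    (Px (2*b) x * reflect b p).coeff (b + i)
      = ∑ j : Fin (b+1), p.coeff j * x ⟨i + j, by have := j.2; omega⟩ := by
  classical
  set y : ℕ → K := fun k => if h : k < 2*b then x ⟨k, h⟩ else 0 with hy
  have hcoeffR : ∀ m : ℕ, (reflect b p).coeff m = if m ≤ b then p.coeff (b - m) else 0 := by
    intro m
    rw [coeff_reflect]
    by_cases hm : m ≤ b
    · rw [if_pos hm, revAt_le hm]
    · rw [if_neg hm, revAt_eq_self_of_lt (by omega)]
      exact coeff_eq_zero_of_natDegree_lt (by omega)
  rw [coeff_mul, Finset.Nat.sum_antidiagonal_eq_sum_range_succ_mk]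
  have key : ∀ k ∈ Finset.range (b + i + 1),
      (Px (2*b) x).coeff k * (reflect b p).coeff (b + i - k)
        = if i ≤ k then y k * p.coeff (k - i) else 0 := by
    intro k hk
    rw [Finset.mem_range] at hk
    rw [hcoeffR]
    by_cases hik : i ≤ k
    · have hk2 : k < 2*b := by omega
      have h3 : b - (b + i - k) = k - i := by omega
      rw [if_pos (by omega : b + i - k ≤ b), if_pos hik, h3, coeff_Px, dif_pos hk2, hy]
      simp [hk2]
    · rw [if_neg (by omega : ¬ b + i - k ≤ b), if_neg hik, mul_zero]
  rw [Finset.sum_congr rfl key]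
  rw [Finset.range_eq_Ico, ← Finset.sum_Ico_consecutive _ (Nat.zero_le i) (by omega : i ≤ b + i + 1)]
  have h1 : ∑ k ∈ Finset.Ico 0 i, (if i ≤ k then y k * p.coeff (k - i) else 0) = 0 := by
    apply Finset.sum_eq_zero
    intro k hk
    rw [Finset.mem_Ico] at hk
    rw [if_neg (by omega)]
  rw [h1, zero_add, Finset.sum_Ico_eq_sum_range]
  have h2 : b + i + 1 - i = b + 1 := by omega
  rw [h2, ← Fin.sum_univ_eq_sum_range (fun j => if i ≤ i + j then y (i+j) * p.coeff (i+j-i) else 0)]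
  apply Finset.sum_congr rfl
  intro j _
  rw [if_pos (by omega)]
  have hj : i + (j : ℕ) - i = j := by omega
  have hlt : i + (j : ℕ) < 2*b := by have := j.2; omega
  rw [hj, hy]
  simp only [dif_pos hlt]
  ring

lemma reflect_reflect' {K : Type*} [Field K] (N : ℕ) (f : K[X]) :
    reflect N (reflect N f) = f := by
  ext i
  rw [coeff_reflect, coeff_reflect, revAt_invol]

lemma natDegree_reflect_le' {K : Type*} [Field K] {N : ℕ} {f : K[X]} (hf : f.natDegree ≤ N) :
    (reflect N f).natDegree ≤ N := by
  rw [natDegree_le_iff_coeff_eq_zero]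
  intro m hm
  rw [coeff_reflect, revAt_eq_self_of_lt hm]
  exact coeff_eq_zero_of_natDegree_lt (by omega)

lemma phi_eq_zero_iff {K : Type*} [Field K] (b : ℕ) (hb : 1 ≤ b) (p : K[X])
    (hp : p.natDegree ≤ b) (x : Fin (2*b) → K) :
    Phi b p x = 0 ↔ ∀ m, b ≤ m → m < 2*b → (Px (2*b) x * reflect b p).coeff m = 0 := by
  rw [funext_iff]
  constructor
  · intro h m hm1 hm2
    have hi : m - b < b := by omega
    have := coeff_Px_mul_reflect b p hp x (m - b) hi
    have hm : b + (m - b) = m := by omega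
    rw [hm] at this
    rw [this]
    have h2 := h ⟨m - b, hi⟩
    simpa [Phi] using h2
  · intro h i
    have hi : (i : ℕ) < b := i.2
    have := coeff_Px_mul_reflect b p hp x i hi
    have h2 := h (b + i) (by omega) (by omega)
    rw [this] at h2
    simpa [Phi] using h2

lemma ker_inter_eq_zero {K : Type*} [Field K] (b : ℕ) (hb : 1 ≤ b) (p q : K[X])
    (hp : p.natDegree = b) (hq : q.natDegree = b) (hpq : IsCoprime p q)
    (x : Fin (2*b) → K) (hxp : Phi b p x = 0) (hxq : Phi b q x = 0) : x = 0 := by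
  classical
  set f := Px (2*b) x with hf
  set A := Px b (fun k => (f * reflect b p).coeff k) with hA
  set B := Px b (fun k => (f * reflect b q).coeff k) with hB
  have hpker := (phi_eq_zero_iff b hb p hp.le x).mp hxp
  have hqker := (phi_eq_zero_iff b hb q hq.le x).mp hxq
  have hdvd : ∀ (r : K[X]) (A' : K[X]), A' = Px b (fun k => (f * reflect b r).coeff k) →
      (∀ m, b ≤ m → m < 2*b → (f * reflect b r).coeff m = 0) →
      X ^ (2*b) ∣ (f * reflect b r - A') := by
    intro r A' hA' hker
    rw [X_pow_dvd_iff]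
    intro d hd
    rw [coeff_sub, hA', coeff_Px]
    by_cases hdb : d < b
    · rw [dif_pos hdb, sub_self]
    · rw [dif_neg hdb, hker d (by omega) hd, sub_zero]
  obtain ⟨Rp, hRp⟩ := hdvd p A hA hpker
  obtain ⟨Rq, hRq⟩ := hdvd q B hB hqker
  have hRp' : f * reflect b p = A + X^(2*b) * Rp := by linear_combination hRp
  have hRq' : f * reflect b q = B + X^(2*b) * Rq := by linear_combination hRq
  have cross : A * reflect b q - B * reflect b p
      = X^(2*b) * (Rq * reflect b p - Rp * reflect b q) := by
    linear_combination (reflect b p) * hRq' - (reflect b q) * hRp'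
  have hAdeg : A.natDegree ≤ b - 1 := natDegree_Px_le _ _
  have hBdeg : B.natDegree ≤ b - 1 := natDegree_Px_le _ _
  have hrq : (reflect b q).natDegree ≤ b := natDegree_reflect_le' hq.le
  have hrp : (reflect b p).natDegree ≤ b := natDegree_reflect_le' hp.le
  have hcrossdeg : (A * reflect b q - B * reflect b p).natDegree < 2*b := by
    apply lt_of_le_of_lt (natDegree_sub_le _ _)
    have h1 : (A * reflect b q).natDegree ≤ 2*b - 1 :=
      le_trans (natDegree_mul_le) (by omega)
    have h2 : (B * reflect b p).natDegree ≤ 2*b - 1 :=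
      le_trans (natDegree_mul_le) (by omega)
    omega
  have hzero : A * reflect b q - B * reflect b p = 0 := by
    apply Polynomial.eq_zero_of_dvd_of_natDegree_lt ⟨_, cross⟩
    rwa [natDegree_X_pow]
  have hABeq : A * reflect b q = B * reflect b p := by linear_combination hzero
  -- reflect at 2b-1
  have hrefl : reflect (b - 1 + b) (A * reflect b q) = reflect (b - 1 + b) (B * reflect b p) := by
    rw [hABeq]
  rw [reflect_mul _ _ hAdeg hrq, reflect_mul _ _ hBdeg hrp,
    reflect_reflect', reflect_reflect'] at hrefl
  -- p divides reflect (b-1) A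
  have hpdvd : p ∣ reflect (b-1) A := by
    apply hpq.dvd_of_dvd_mul_right
    exact ⟨reflect (b-1) B, by linear_combination hrefl⟩
  have hAr0 : reflect (b-1) A = 0 := by
    rcases eq_or_ne (reflect (b-1) A) 0 with h | h
    · exact h
    · exfalso
      have := Polynomial.natDegree_le_of_dvd hpdvd h
      have hle : (reflect (b-1) A).natDegree ≤ b - 1 := natDegree_reflect_le' hAdeg
      omega
  have hA0 : A = 0 := by
    have := congrArg (reflect (b-1)) hAr0
    rwa [reflect_reflect', reflect_zero] at this
  have hdvdf : X^(2*b) ∣ f := by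
    have hconst : (reflect b p).coeff 0 ≠ 0 := by
      rw [coeff_reflect, revAt_le (Nat.zero_le b), Nat.sub_zero, ← hp]
      exact leadingCoeff_ne_zero.mpr (fun h0 => by simp [h0] at hp; omega)
    have hX : ¬ (X : K[X]) ∣ reflect b p := fun h => hconst (X_dvd_iff.mp h)
    have hcop2 : IsCoprime ((X : K[X])^(2*b)) (reflect b p) :=
      (Polynomial.prime_X.coprime_iff_not_dvd.mpr hX).pow_left
    apply hcop2.dvd_of_dvd_mul_right
    exact ⟨Rp, by rw [hA0] at hRp'; linear_combination hRp'⟩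
  funext k
  have := X_pow_dvd_iff.mp hdvdf k k.2
  rw [hf, coeff_Px, dif_pos k.2] at this
  simpa using this

lemma ker_prefix_zero {K : Type*} [Field K] (b : ℕ) (p : K[X]) (hp : p.natDegree = b)
    (hb : 1 ≤ b) (x : Fin (2*b) → K) (hx : Phi b p x = 0)
    (h0 : ∀ j : Fin (2*b), (j : ℕ) < b → x j = 0) : x = 0 := by
  have key : ∀ k, ∀ (hk : k < 2*b), x ⟨k, hk⟩ = 0 := by
    intro k
    induction k using Nat.strong_induction_on with
    | _ k ih =>
      intro hk
      by_cases hkb : k < b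
      · exact h0 _ hkb
      · have hi : k - b < b := by omega
        have heq := congrFun hx ⟨k - b, hi⟩
        simp only [Phi, LinearMap.coe_mk, AddHom.coe_mk, Pi.zero_apply] at heq
        rw [Fin.sum_univ_castSucc] at heq
        have hlast : (p.coeff b) * x ⟨k, hk⟩ = 0 := by
          rw [← heq]
          have hz : ∀ j : Fin b, p.coeff ((Fin.castSucc j) : ℕ) *
              x ⟨(k - b) + ((Fin.castSucc j) : ℕ), by have := j.2; omega⟩ = 0 := by
            intro j
            have hj : (j : ℕ) < b := j.2
            have := ih ((k - b) + j) (by omega) (by omega)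
            simp only [Fin.coe_castSucc]
            rw [this, mul_zero]
          rw [Finset.sum_eq_zero (fun j _ => hz j), zero_add]
          simp only [Fin.val_last]
          refine congrArg (fun z => p.coeff b * x z) (Fin.ext ?_)
          show k = k - b + b
          omega
        have hlead : p.coeff b ≠ 0 := by
          rw [← hp]
          exact leadingCoeff_ne_zero.mpr (fun h0' => by simp [h0'] at hp; omega)
        exact (mul_eq_zero.mp hlast).resolve_left hlead
  funext j
  exact key j j.2 |>.symm ▸ (by have := key j.1 j.2; simpa using this)

lemma finrank_ker_phi {K : Type*} [Field K] (b : ℕ) (hb : 1 ≤ b) (p : K[X])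
    (hp : p.natDegree = b) :
    Module.finrank K ↥(LinearMap.ker (Phi b p)) = b := by
  have h1 : Module.finrank K (Fin (2*b) → K) = 2*b := by
    simp [Module.finrank_fintype_fun_eq_card]
  have hfb : Module.finrank K (Fin b → K) = b := by
    simp [Module.finrank_fintype_fun_eq_card]
  have h2 := LinearMap.finrank_range_add_finrank_ker (Phi b p)
  rw [h1] at h2
  have h3 : Module.finrank K ↥(LinearMap.range (Phi b p)) ≤ b := by
    have := Submodule.finrank_le (LinearMap.range (Phi b p))
    omega
  have h4 : Module.finrank K ↥(LinearMap.ker (Phi b p)) ≤ b := by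
    set π : (Fin (2*b) → K) →ₗ[K] (Fin b → K) :=
      LinearMap.funLeft K K (Fin.castLE (by omega)) with hπ
    have hinj : Function.Injective (π.comp (LinearMap.ker (Phi b p)).subtype) := by
      rw [← LinearMap.ker_eq_bot, Submodule.eq_bot_iff]
      rintro ⟨x, hx⟩ hmem
      rw [LinearMap.mem_ker] at hmem
      have hx0 : x = 0 := by
        apply ker_prefix_zero b p hp hb x (LinearMap.mem_ker.mp hx)
        intro j hj
        have := congrFun hmem ⟨j.1, hj⟩
        simpa [hπ, LinearMap.funLeft] using this
      exact Subtype.ext hx0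
    have := LinearMap.finrank_le_finrank_of_injective hinj
    omega
  omega


lemma sum_chi_zero_of {V : Type*} [AddCommGroup V] (s : Finset V) (B : V → ZMod 2) (x0 : V)
    (hx0 : x0 + x0 = 0) (hmem : ∀ x ∈ s, x + x0 ∈ s)
    (hB : ∀ x, B (x + x0) = B x + 1) :
    ∑ x ∈ s, (if B x = 0 then (1 : ℤ) else -1) = 0 := by
  have key : ∀ c : ZMod 2, (if c = 0 then (1:ℤ) else -1) + (if c + 1 = 0 then 1 else -1) = 0 := by
    decide
  apply Finset.sum_involution (fun a _ => a + x0)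
  · intro a _
    rw [hB]
    exact key (B a)
  · intro a _ _
    intro h
    have hx00 : x0 = 0 := by
      have := add_left_cancel (a := a) (b := x0) (c := 0) (by rw [add_zero]; exact h)
      exact this
    have := hB a
    rw [hx00, add_zero, left_eq_add] at this
    exact one_ne_zero this
  · intro a ha
    exact hmem a ha
  · intro a _
    rw [add_assoc, hx0, add_zero]

lemma sum_union_finsets {V ι : Type*} [AddCommGroup V] [DecidableEq V] [Fintype ι] [Nonempty ι]
    (Ks : ι → Finset V) (g : V → ℤ)
    (h0 : ∀ i, (0 : V) ∈ Ks i)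
    (hpair : ∀ i j, i ≠ j → Ks i ∩ Ks j ⊆ {0}) :
    ∑ x ∈ Finset.univ.biUnion Ks, g x
      = (∑ i, ∑ x ∈ Ks i, g x) - ((Fintype.card ι : ℤ) - 1) * g 0 := by
  classical
  have hdisj : ∀ i ∈ Finset.univ, ∀ j ∈ Finset.univ, i ≠ j →
      Disjoint ((Ks i).erase 0) ((Ks j).erase 0) := by
    intro i _ j _ hij
    rw [Finset.disjoint_left]
    intro x hxi hxj
    have hx1 := Finset.mem_of_mem_erase hxi
    have hx2 := Finset.mem_of_mem_erase hxj
    have := hpair i j hij (Finset.mem_inter.mpr ⟨hx1, hx2⟩)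
    rw [Finset.mem_singleton] at this
    exact (Finset.ne_of_mem_erase hxi) this
  have hsplit : Finset.univ.biUnion Ks
      = insert 0 (Finset.univ.biUnion fun i => (Ks i).erase 0) := by
    ext x
    simp only [Finset.mem_biUnion, Finset.mem_univ, true_and, Finset.mem_insert,
      Finset.mem_erase]
    constructor
    · rintro ⟨i, hi⟩
      by_cases hx : x = 0
      · exact Or.inl hx
      · exact Or.inr ⟨i, hx, hi⟩
    · rintro (rfl | ⟨i, _, hi⟩)
      · exact ⟨Classical.arbitrary ι, h0 _⟩
      · exact ⟨i, hi⟩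
  rw [hsplit, Finset.sum_insert (by simp), Finset.sum_biUnion hdisj]
  have herase : ∀ i, ∑ x ∈ (Ks i).erase 0, g x = (∑ x ∈ Ks i, g x) - g 0 := by
    intro i
    rw [Finset.sum_erase_eq_sub (h0 i)]
  rw [Finset.sum_congr rfl (fun i _ => herase i), Finset.sum_sub_distrib]
  simp only [Finset.sum_const, Finset.card_univ, nsmul_eq_mul]
  ring


lemma exists_Bf_one (l n : ℕ) (a : Fin n → GaloisField 2 l) (ha : a ≠ 0) :
    ∃ x : Fin n → GaloisField 2 l,
      (∑ j, Algebra.trace (ZMod 2) (GaloisField 2 l) (a j * x j)) = 1 := by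
  classical
  obtain ⟨j0, hj0⟩ : ∃ j0, a j0 ≠ 0 := by
    by_contra h
    push_neg at h
    exact ha (funext h)
  have hnd := traceForm_nondegenerate (ZMod 2) (GaloisField 2 l)
  obtain ⟨y, hy⟩ : ∃ y, Algebra.trace (ZMod 2) (GaloisField 2 l) (a j0 * y) ≠ 0 := by
    by_contra h
    push_neg at h
    apply hj0
    apply hnd.1
    intro y
    rw [Algebra.traceForm_apply]
    exact h y
  have h1 : Algebra.trace (ZMod 2) (GaloisField 2 l) (a j0 * y) = 1 := by
    have : ∀ c : ZMod 2, c ≠ 0 → c = 1 := by decide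
    exact this _ hy
  refine ⟨Pi.single j0 y, ?_⟩
  rw [Finset.sum_eq_single j0]
  · rw [Pi.single_eq_same, h1]
  · intro j _ hj
    rw [Pi.single_eq_of_ne hj, mul_zero, map_zero]
  · intro h
    exact absurd (Finset.mem_univ j0) h



/-- The PS⁺ case of the LRS construction: given `t = 2^(l*b - 1) + 1` pairwise
coprime polynomials of natural degree exactly `b` over `F = GaloisField 2 l`,
the Boolean function whose support is the union of the kernels of the
associated LRS linear maps (so `f 0 = 1`) is bent: every Walsh–Hadamard
coefficient squares to `2^(2*m)` where `m = l*b`. -/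
theorem lrs_psPlus_bent (l b : ℕ) (hl : 1 ≤ l) (hb : 1 ≤ b)
    (p : Fin (2 ^ (l * b - 1) + 1) → Polynomial (GaloisField 2 l))
    (hdeg : ∀ i, (p i).natDegree = b)
    (hcop : ∀ i j, i ≠ j → IsCoprime (p i) (p j))
    (f : (Fin (2 * b) → GaloisField 2 l) → ZMod 2)
    (hf : ∀ x, f x = 1 ↔ ∃ i, Phi b (p i) x = 0) :
    ∀ a : Fin (2 * b) → GaloisField 2 l,
      ((∑ x : Fin (2 * b) → GaloisField 2 l,
          (if f x = 0 then (1 : ℤ) else -1) *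
            (if (∑ j, Algebra.trace (ZMod 2) (GaloisField 2 l) (a j * x j)) = 0
              then (1 : ℤ) else -1)) ^ 2) = 2 ^ (2 * (l * b)) := by
  intro a
  classical
  have hm : 1 ≤ l * b := by
    calc 1 = 1 * 1 := (one_mul 1).symm
    _ ≤ l * b := Nat.mul_le_mul hl hb
  set Bf : (Fin (2*b) → GaloisField 2 l) → ZMod 2 :=
    fun x => ∑ j, Algebra.trace (ZMod 2) (GaloisField 2 l) (a j * x j) with hBf
  have hgoal : ∀ x : Fin (2*b) → GaloisField 2 l,
      (∑ j, Algebra.trace (ZMod 2) (GaloisField 2 l) (a j * x j)) = Bf x := fun x => rfl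
  simp only [hgoal]
  -- basic properties of Bf
  have hBf_add : ∀ x y, Bf (x + y) = Bf x + Bf y := by
    intro x y
    simp only [hBf, Pi.add_apply, mul_add, map_add, Finset.sum_add_distrib]
  have hBf0 : Bf 0 = 0 := by simp [hBf]
  have hchar2 : ∀ v : Fin (2*b) → GaloisField 2 l, v + v = 0 := by
    intro v; funext j; exact CharTwo.add_self_eq_zero _
  -- kernels
  set ker_i : Fin (2 ^ (l*b - 1) + 1) → Submodule (GaloisField 2 l) (Fin (2*b) → GaloisField 2 l) :=
    fun i => LinearMap.ker (Phi b (p i)) with hker_i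
  set Ki : Fin (2 ^ (l*b - 1) + 1) → Finset (Fin (2*b) → GaloisField 2 l) :=
    fun i => Finset.univ.filter (fun x => x ∈ ker_i i) with hKi
  have hKi0 : ∀ i, (0 : Fin (2*b) → GaloisField 2 l) ∈ Ki i := by
    intro i
    simp [hKi, hker_i]
  have hcardF : Fintype.card (GaloisField 2 l) = 2 ^ l := by
    rw [← Nat.card_eq_fintype_card, GaloisField.card 2 l (by omega)]
  have hKcard : ∀ i, (Ki i).card = 2 ^ (l*b) := by
    intro i
    have e1 : (Ki i).card = Fintype.card {x // x ∈ ker_i i} := (Fintype.card_subtype _).symm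
    have e2 : Fintype.card {x // x ∈ ker_i i}
        = Fintype.card (GaloisField 2 l) ^ (Module.finrank (GaloisField 2 l) ↥(ker_i i)) :=
      Module.card_eq_pow_finrank (K := GaloisField 2 l)
    rw [e1, e2, hcardF, hker_i, finrank_ker_phi b hb (p i) (hdeg i), ← pow_mul]
  -- sum over a kernel
  have hKsum : ∀ i, ∑ x ∈ Ki i, (if Bf x = 0 then (1:ℤ) else -1)
      = if (∀ x ∈ ker_i i, Bf x = 0) then ((2:ℤ)^(l*b)) else 0 := by
    intro i
    by_cases horth : ∀ x ∈ ker_i i, Bf x = 0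
    · rw [if_pos horth]
      rw [Finset.sum_congr rfl (fun x hx => by
        rw [if_pos (horth x (Finset.mem_filter.mp hx).2)])]
      rw [Finset.sum_const, hKcard i, nsmul_eq_mul]
      push_cast
      ring
    · rw [if_neg horth]
      push_neg at horth
      obtain ⟨x0, hx0mem, hx0⟩ := horth
      have hx0one : Bf x0 = 1 := by
        have : ∀ c : ZMod 2, c ≠ 0 → c = 1 := by decide
        exact this _ hx0
      apply sum_chi_zero_of (Ki i) Bf x0 (hchar2 x0)
      · intro x hx
        simp only [hKi, Finset.mem_filter, Finset.mem_univ, true_and] at hx ⊢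
        exact (ker_i i).add_mem hx hx0mem
      · intro x; rw [hBf_add, hx0one]
  -- the orthogonality filter
  set T : Finset (Fin (2 ^ (l*b - 1) + 1)) :=
    Finset.univ.filter (fun i => ∀ x ∈ ker_i i, Bf x = 0) with hT
  have hTsum : ∑ i, ∑ x ∈ Ki i, (if Bf x = 0 then (1:ℤ) else -1) = (T.card : ℤ) * 2^(l*b) := by
    rw [Finset.sum_congr rfl (fun i _ => hKsum i), ← Finset.sum_filter, Finset.sum_const,
      nsmul_eq_mul]
  -- support
  set S : Finset (Fin (2*b) → GaloisField 2 l) :=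
    Finset.univ.filter (fun x => ∃ i, Phi b (p i) x = 0) with hS
  have hSunion : S = Finset.univ.biUnion Ki := by
    ext x
    simp [hS, hKi, hker_i, LinearMap.mem_ker]
  have hpairKi : ∀ i j, i ≠ j → Ki i ∩ Ki j ⊆ {0} := by
    intro i j hij x hx
    rw [Finset.mem_inter] at hx
    rw [Finset.mem_singleton]
    have h1 : Phi b (p i) x = 0 := by
      have := (Finset.mem_filter.mp hx.1).2; rwa [hker_i, LinearMap.mem_ker] at this
    have h2 : Phi b (p j) x = 0 := by
      have := (Finset.mem_filter.mp hx.2).2; rwa [hker_i, LinearMap.mem_ker] at this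
    exact ker_inter_eq_zero b hb (p i) (p j) (hdeg i) (hdeg j) (hcop i j hij) x h1 h2
  have hSsum : ∑ x ∈ S, (if Bf x = 0 then (1:ℤ) else -1)
      = (T.card : ℤ) * 2^(l*b) - ((2:ℤ)^(l*b-1) + 1 - 1) * 1 := by
    rw [hSunion, sum_union_finsets Ki _ hKi0 hpairKi, hTsum, hBf0]
    simp only [if_pos rfl, Fintype.card_fin]
    push_cast
    ring
  -- decompose the Walsh sum
  have hsupport : ∀ x, (if f x = 0 then (1:ℤ) else -1)
      = 1 - 2 * (if x ∈ S then 1 else 0) := by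
    intro x
    by_cases hxS : x ∈ S
    · rw [if_pos hxS]
      have hfx : f x = 1 := (hf x).mpr (by
        have := Finset.mem_filter.mp hxS; exact this.2)
      rw [hfx, if_neg (by decide : ¬(1 : ZMod 2) = 0)]
      norm_num
    · rw [if_neg hxS]
      have hfx1 : f x ≠ 1 := fun h =>
        hxS (Finset.mem_filter.mpr ⟨Finset.mem_univ x, (hf x).mp h⟩)
      have hfx : f x = 0 := by
        have : ∀ c : ZMod 2, c ≠ 1 → c = 0 := by decide
        exact this _ hfx1
      rw [hfx, if_pos rfl]
      norm_num
  have hWsplit : (∑ x : Fin (2*b) → GaloisField 2 l,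
        (if f x = 0 then (1:ℤ) else -1) * (if Bf x = 0 then (1:ℤ) else -1))
      = (∑ x : Fin (2*b) → GaloisField 2 l, (if Bf x = 0 then (1:ℤ) else -1))
        - 2 * ∑ x ∈ S, (if Bf x = 0 then (1:ℤ) else -1) := by
    have step : ∀ x ∈ Finset.univ, (if f x = 0 then (1:ℤ) else -1) * (if Bf x = 0 then (1:ℤ) else -1)
        = (if Bf x = 0 then (1:ℤ) else -1)
          - 2 * (if x ∈ S then (if Bf x = 0 then (1:ℤ) else -1) else 0) := by
      intro x _
      rw [hsupport x]
      by_cases hxS : x ∈ S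
      · rw [if_pos hxS, if_pos hxS]; ring
      · rw [if_neg hxS, if_neg hxS]; ring
    rw [Finset.sum_congr rfl step, Finset.sum_sub_distrib, ← Finset.mul_sum, ← Finset.sum_filter,
      Finset.filter_univ_mem]
  rw [hWsplit, hSsum]
  -- total sum
  have hcardV : Fintype.card (Fin (2*b) → GaloisField 2 l) = 2 ^ (2*(l*b)) := by
    rw [Fintype.card_fun, hcardF, Fintype.card_fin, ← pow_mul]
    congr 1
    ring
  by_cases ha : a = 0
  · -- a = 0 case
    have hBfzero : ∀ x, Bf x = 0 := by
      intro x
      simp [hBf, ha]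
    have hTot : (∑ x : Fin (2*b) → GaloisField 2 l, (if Bf x = 0 then (1:ℤ) else -1))
        = (2:ℤ)^(2*(l*b)) := by
      rw [Finset.sum_congr rfl (fun x _ => by rw [if_pos (hBfzero x)]), Finset.sum_const,
        Finset.card_univ, hcardV, nsmul_eq_mul]
      push_cast
      ring
    have hTcard : T.card = 2 ^ (l*b-1) + 1 := by
      rw [hT]
      rw [Finset.filter_true_of_mem (fun i _ => fun x _ => hBfzero x)]
      simp
    rw [hTot, hTcard]
    have hexp : (2:ℤ)^(l*b) = 2 * 2^(l*b-1) := by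
      rw [← pow_succ']
      congr 1
      omega
    have hexp2 : (2:ℤ)^(2*(l*b)) = (2 * 2^(l*b-1))^2 := by
      rw [← hexp, ← pow_mul]
      congr 1
      ring
    push_cast
    rw [hexp, hexp2]
    ring
  · -- a ≠ 0 case
    obtain ⟨x1, hx1⟩ := exists_Bf_one l (2*b) a ha
    have hx1' : Bf x1 = 1 := hx1
    have hTot : (∑ x : Fin (2*b) → GaloisField 2 l, (if Bf x = 0 then (1:ℤ) else -1)) = 0 := by
      apply sum_chi_zero_of Finset.univ Bf x1 (hchar2 x1) (fun x _ => Finset.mem_univ _)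
      intro x; rw [hBf_add, hx1']
    have hTle : T.card ≤ 1 := by
      rw [Finset.card_le_one]
      intro i hi j hj
      by_contra hij
      have horthi := (Finset.mem_filter.mp hi).2
      have horthj := (Finset.mem_filter.mp hj).2
      have hbot : ker_i i ⊓ ker_i j = ⊥ := by
        rw [Submodule.eq_bot_iff]
        intro x hx
        rw [Submodule.mem_inf] at hx
        exact ker_inter_eq_zero b hb (p i) (p j) (hdeg i) (hdeg j) (hcop i j hij) x
          (LinearMap.mem_ker.mp hx.1) (LinearMap.mem_ker.mp hx.2)
      have hfrV : Module.finrank (GaloisField 2 l) (Fin (2*b) → GaloisField 2 l) = 2*b := by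
        simp [Module.finrank_fintype_fun_eq_card]
      have hfr : Module.finrank (GaloisField 2 l) ↥(ker_i i ⊔ ker_i j) = 2*b := by
        have hh := Submodule.finrank_sup_add_finrank_inf_eq (ker_i i) (ker_i j)
        rw [hbot, finrank_bot] at hh
        rw [hker_i] at hh ⊢
        rw [finrank_ker_phi b hb (p i) (hdeg i), finrank_ker_phi b hb (p j) (hdeg j)] at hh
        omega
      have htop : ker_i i ⊔ ker_i j = ⊤ :=
        Submodule.eq_top_of_finrank_eq (by rw [hfr, hfrV])
      have hx1mem : x1 ∈ ker_i i ⊔ ker_i j := by rw [htop]; exact Submodule.mem_top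
      obtain ⟨u, hu, v, hv, huv⟩ := Submodule.mem_sup.mp hx1mem
      have : Bf x1 = 0 := by
        rw [← huv, hBf_add, horthi u hu, horthj v hv, add_zero]
      rw [hx1'] at this
      exact one_ne_zero this
    rw [hTot]
    have hexp : (2:ℤ)^(l*b) = 2 * 2^(l*b-1) := by
      rw [← pow_succ']
      congr 1
      omega
    have hexp2 : (2:ℤ)^(2*(l*b)) = (2 * 2^(l*b-1))^2 := by
      rw [← hexp, ← pow_mul]
      congr 1
      ring
    interval_cases h : T.card
    · rw [hexp, hexp2]
      push_cast
      ring
    · rw [hexp, hexp2]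
      push_cast
      ring
end

section
/- Let l, b ≥ 1, let m = l·b, and let F = GaloisField 2 l. There exists a finite set S of polynomials over F with |S| = 2^{m−1} such that every p ∈ S is monic of natural degree b with nonzero constant term (p.coeff 0 ≠ 0), and any two distinct elements of S are coprime, if and only if b = 1 or b = 2. -/
open Polynomial

-- L1: distinct monic irreducibles are coprime
lemma coprime_of_monic_irred {F : Type*} [Field F] {p q : F[X]}
    (hpm : p.Monic) (hqm : q.Monic) (hpi : Irreducible p) (hqi : Irreducible q)
    (hne : p ≠ q) : IsCoprime p q := by
  rw [hpi.coprime_iff_not_dvd]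
  intro hdvd
  exact hne (eq_of_monic_of_associated hpm hqm (hpi.associated_of_dvd hqi hdvd))

-- L4: distinct monic linear coprime
lemma coprime_linear {F : Type*} [Field F] {a b : F} (h : a ≠ b) :
    IsCoprime (X + C a) (X + C b) := by
  refine coprime_of_monic_irred (monic_X_add_C a) (monic_X_add_C b) ?_ ?_ ?_
  · exact irreducible_of_degree_eq_one (degree_X_add_C a)
  · exact irreducible_of_degree_eq_one (degree_X_add_C b)
  · intro he
    apply h
    have := congrArg (fun p => Polynomial.coeff p 0) he
    simpa using this

-- key: monic irreducible with nonzero constant term divides X^(q^d - 1) - 1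
lemma irred_dvd_X_pow_sub_one {F : Type*} [Field F] [Fintype F] {π : F[X]}
    (hm : π.Monic) (hi : Irreducible π) (h0 : π.coeff 0 ≠ 0) :
    π ∣ X ^ (Fintype.card F ^ π.natDegree - 1) - 1 := by
  haveI := Fact.mk hi
  set K := AdjoinRoot π
  have hπ0 : π ≠ 0 := hi.ne_zero
  let pb : PowerBasis F K := AdjoinRoot.powerBasis hπ0
  haveI : Module.Finite F K := Module.Finite.of_basis pb.basis
  haveI : Finite K := Module.finite_of_finite F
  haveI : Fintype K := Fintype.ofFinite K
  have hcard : Fintype.card K = Fintype.card F ^ π.natDegree := by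
    rw [Module.card_fintype pb.basis, Fintype.card_fin, AdjoinRoot.powerBasis_dim]
  set x : K := AdjoinRoot.root π
  have hx0 : x ≠ 0 := by
    intro hx
    apply h0
    have := AdjoinRoot.eval₂_root π
    rw [show AdjoinRoot.root π = x from rfl, hx, eval₂_at_zero] at this
    exact (_root_.map_eq_zero (AdjoinRoot.of π)).mp this
  have hxp : x ^ (Fintype.card F ^ π.natDegree - 1) = 1 := by
    rw [← hcard]; exact FiniteField.pow_card_sub_one_eq_one x hx0
  have hmin : minpoly F x = π := by
    rw [AdjoinRoot.minpoly_root hπ0, hm.leadingCoeff, inv_one, map_one, mul_one]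
  conv_lhs => rw [← hmin]
  apply minpoly.dvd
  rw [map_sub, map_pow, aeval_X, map_one, hxp, sub_self]

lemma card_irred_le {F : Type*} [Field F] [Fintype F] {d : ℕ} (hd : 1 ≤ d)
    (T : Finset F[X])
    (hT : ∀ π ∈ T, π.Monic ∧ Irreducible π ∧ π.natDegree = d ∧ π.coeff 0 ≠ 0) :
    d * T.card ≤ Fintype.card F ^ d - 1 := by
  set q := Fintype.card F
  have hq : 2 ≤ q := Fintype.one_lt_card
  have hqd : 1 ≤ q ^ d - 1 := by
    have : 2 ≤ q ^ d := le_trans hq (Nat.le_self_pow (by omega) q)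
    omega
  set f : F[X] := X ^ (q ^ d - 1) - 1 with hf
  have hfne : f ≠ 0 := by
    have : f.natDegree = q ^ d - 1 := by
      rw [hf, ← C_1, natDegree_X_pow_sub_C]
    intro h
    rw [h, natDegree_zero] at this
    omega
  have hdvd : ∏ π ∈ T, π ∣ f := by
    apply Finset.prod_dvd_of_coprime
    · intro a ha b hb hab
      obtain ⟨ham, hai, -, -⟩ := hT a ha
      obtain ⟨hbm, hbi, -, -⟩ := hT b hb
      exact coprime_of_monic_irred ham hbm hai hbi hab
    · intro π hπ
      obtain ⟨hm, hi, hdeg, h0⟩ := hT π hπ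
      have := irred_dvd_X_pow_sub_one hm hi h0
      rwa [hdeg] at this
  have hle := natDegree_le_of_dvd hdvd hfne
  rw [natDegree_prod _ _ (fun π hπ => ((hT π hπ).2.1).ne_zero)] at hle
  have : ∑ π ∈ T, π.natDegree = d * T.card := by
    rw [Finset.sum_congr rfl (fun π hπ => (hT π hπ).2.2.1), Finset.sum_const, smul_eq_mul,
      mul_comm]
  rw [this] at hle
  calc d * T.card ≤ f.natDegree := hle
    _ = q ^ d - 1 := by rw [hf, ← C_1, natDegree_X_pow_sub_C]

lemma icc3 (c : ℕ → ℕ) : (∑ d ∈ Finset.Icc 1 3, c d) = c 1 + c 2 + c 3 := by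
  have h : Finset.Icc 1 3 = ({1, 2, 3} : Finset ℕ) := by decide
  rw [h]
  simp [Finset.sum_insert, Finset.mem_insert]
  ring

lemma icc4 (c : ℕ → ℕ) : (∑ d ∈ Finset.Icc 1 4, c d) = c 1 + c 2 + c 3 + c 4 := by
  have h : Finset.Icc 1 4 = ({1, 2, 3, 4} : Finset ℕ) := by decide
  rw [h]
  simp [Finset.sum_insert, Finset.mem_insert]
  ring

lemma arith_step (q b : ℕ) (hq : 2 ≤ q) (hb : 3 ≤ b) (c : ℕ → ℕ)
    (hc : (b+1) * c (b+1) ≤ q ^ (b+1) - 1)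
    (ih : 2 * (∑ d ∈ Finset.Icc 1 b, c d) < q ^ b) :
    2 * (∑ d ∈ Finset.Icc 1 (b+1), c d) < q ^ (b+1) := by
  rw [← Finset.Ico_add_one_right_eq_Icc, Finset.sum_Ico_succ_top (by omega), Finset.Ico_add_one_right_eq_Icc]
  have h4 : 4 * c (b+1) ≤ (b+1) * c (b+1) := Nat.mul_le_mul_right _ (by omega)
  have hpow : 2 * q ^ b ≤ q ^ (b+1) := by
    rw [pow_succ]
    nlinarith [Nat.one_le_pow b q (show 0 < q by omega)]
  have h1 : 1 ≤ q ^ (b+1) := Nat.one_le_pow _ _ (by omega)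
  omega

lemma arith_main (q b : ℕ) (hq : 2 ≤ q) (hb : 4 ≤ b ∨ (b = 3 ∧ 4 ≤ q)) (c : ℕ → ℕ)
    (hc : ∀ d ∈ Finset.Icc 1 b, d * c d ≤ q ^ d - 1) :
    2 * (∑ d ∈ Finset.Icc 1 b, c d) < q ^ b := by
  rcases le_or_gt 4 q with hq4 | hq4
  · have hb3 : 3 ≤ b := by omega
    clear hb
    induction b, hb3 using Nat.le_induction with
    | base =>
      have h1 := hc 1 (by rw [Finset.mem_Icc]; omega)
      have h2 := hc 2 (by rw [Finset.mem_Icc]; omega)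
      have h3 := hc 3 (by rw [Finset.mem_Icc]; omega)
      simp only [pow_one] at h1
      rw [icc3]
      have hq1 : 1 ≤ q ^ 2 := Nat.one_le_pow _ _ (by omega)
      have hq2 : 1 ≤ q ^ 3 := Nat.one_le_pow _ _ (by omega)
      have b1 : ((c 1 : ℤ)) + 1 ≤ (q : ℤ) := by omega
      have b2 : 2 * ((c 2 : ℤ)) + 1 ≤ (q : ℤ) ^ 2 := by
        have : 2 * c 2 + 1 ≤ q ^ 2 := by omega
        exact_mod_cast this
      have b3 : 3 * ((c 3 : ℤ)) + 1 ≤ (q : ℤ) ^ 3 := by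
        have : 3 * c 3 + 1 ≤ q ^ 3 := by omega
        exact_mod_cast this
      have h4 : (0 : ℤ) ≤ (q : ℤ) - 4 := by
        have : (4 : ℤ) ≤ (q : ℤ) := by exact_mod_cast hq4
        omega
      have goal : 2 * ((c 1 : ℤ) + c 2 + c 3) < (q : ℤ) ^ 3 := by
        nlinarith [b1, b2, b3, h4, mul_nonneg h4 h4, mul_nonneg (mul_nonneg h4 h4) h4]
      exact_mod_cast goal
    | succ b hb ih =>
      exact arith_step q b hq hb c (hc (b+1) (by rw [Finset.mem_Icc]; omega))
        (ih (fun d hd => hc d (by rw [Finset.mem_Icc] at hd ⊢; omega)))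
  · have hb4 : 4 ≤ b := by omega
    clear hb
    induction b, hb4 using Nat.le_induction with
    | base =>
      have h1 := hc 1 (by rw [Finset.mem_Icc]; omega)
      have h2 := hc 2 (by rw [Finset.mem_Icc]; omega)
      have h3 := hc 3 (by rw [Finset.mem_Icc]; omega)
      have h4 := hc 4 (by rw [Finset.mem_Icc]; omega)
      rw [icc4]
      interval_cases q <;> norm_num at h1 h2 h3 h4 ⊢ <;> omega
    | succ b hb ih =>
      exact arith_step q b hq (by omega) c (hc (b+1) (by rw [Finset.mem_Icc]; omega))
        (ih (fun d hd => hc d (by rw [Finset.mem_Icc] at hd ⊢; omega)))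

section
variable {F : Type*} [Field F]

lemma exists_monic_irred_factor (p : F[X]) (hp : 1 ≤ p.natDegree) :
    ∃ π : F[X], π.Monic ∧ Irreducible π ∧ π ∣ p := by
  have hp0 : p ≠ 0 := fun h => by simp [h] at hp
  have hpu : ¬IsUnit p := fun h => by
    rw [Polynomial.natDegree_eq_zero_of_isUnit h] at hp; omega
  obtain ⟨i, hi, hdvd⟩ := WfDvdMonoid.exists_irreducible_factor hpu hp0
  have hi0 : i ≠ 0 := hi.ne_zero
  have hu : IsUnit (C i.leadingCoeff⁻¹) :=
    isUnit_C.mpr (IsUnit.inv (isUnit_iff_ne_zero.mpr (leadingCoeff_ne_zero.mpr hi0)))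
  have hassoc : Associated i (i * C i.leadingCoeff⁻¹) := associated_mul_unit_right _ _ hu
  exact ⟨i * C i.leadingCoeff⁻¹, monic_mul_leadingCoeff_inv hi0, hassoc.irreducible hi,
    hassoc.symm.dvd.trans hdvd⟩
end

lemma coeff_zero_ne_of_dvd {F : Type*} [Field F] {π p : F[X]} (hdvd : π ∣ p)
    (h0 : p.coeff 0 ≠ 0) : π.coeff 0 ≠ 0 := by
  intro h
  exact h0 (X_dvd_iff.mp ((X_dvd_iff.mpr h).trans hdvd))

lemma forward_generic (l b : ℕ) (hl : 1 ≤ l) (hb3 : 3 ≤ b) (hnot : ¬(l = 1 ∧ b = 3))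
    (S : Finset (Polynomial (GaloisField 2 l)))
    (hcard : S.card = 2 ^ (l * b - 1))
    (hmem : ∀ p ∈ S, p.Monic ∧ p.natDegree = b ∧ p.coeff 0 ≠ 0)
    (hco : ∀ p ∈ S, ∀ q ∈ S, p ≠ q → IsCoprime p q) : False := by
  classical
  set F := GaloisField 2 l
  haveI : Fintype F := Fintype.ofFinite F
  have hqF : Fintype.card F = 2 ^ l := by
    rw [← Nat.card_eq_fintype_card]; exact GaloisField.card 2 l (by omega)
  set q := Fintype.card F with hq
  -- choose a monic irreducible factor of each member
  have hch : ∀ p : F[X], ∃ π : F[X], p ∈ S → π.Monic ∧ Irreducible π ∧ π ∣ p := by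
    intro p
    by_cases hp : p ∈ S
    · obtain ⟨π, h1, h2, h3⟩ := exists_monic_irred_factor p
        (by rw [(hmem p hp).2.1]; omega)
      exact ⟨π, fun _ => ⟨h1, h2, h3⟩⟩
    · exact ⟨1, fun h => absurd h hp⟩
  choose g hg using hch
  set T := S.image g with hT
  have hinj : Set.InjOn g S := by
    intro p hp p' hp' he
    by_contra hne
    obtain ⟨-, hi, hdvd⟩ := hg p hp
    obtain ⟨-, -, hdvd'⟩ := hg p' hp'
    exact hi.not_isUnit ((hco p hp p' hp' hne).isUnit_of_dvd' hdvd (he ▸ hdvd'))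
  have hTcard : T.card = S.card := Finset.card_image_of_injOn hinj
  have hTmem : ∀ π ∈ T, π.Monic ∧ Irreducible π ∧ 1 ≤ π.natDegree ∧ π.natDegree ≤ b
      ∧ π.coeff 0 ≠ 0 := by
    intro π hπ
    obtain ⟨p, hp, rfl⟩ := Finset.mem_image.mp hπ
    obtain ⟨h1, h2, h3⟩ := hg p hp
    obtain ⟨hpm, hpd, hp0⟩ := hmem p hp
    refine ⟨h1, h2, ?_, ?_, coeff_zero_ne_of_dvd h3 hp0⟩
    · by_contra h
      push_neg at h
      interval_cases hh : (g p).natDegree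
      · exact h2.not_isUnit (h1.natDegree_eq_zero.mp hh ▸ isUnit_one)
    · rw [← hpd]
      exact natDegree_le_of_dvd h3 hpm.ne_zero
  have hfib : T.card = ∑ d ∈ Finset.Icc 1 b, (T.filter (fun π => π.natDegree = d)).card := by
    apply Finset.card_eq_sum_card_fiberwise
    intro π hπ
    obtain ⟨-, -, h1, h2, -⟩ := hTmem π hπ
    rw [Finset.mem_coe, Finset.mem_Icc]; exact ⟨h1, h2⟩
  have hbound : ∀ d ∈ Finset.Icc 1 b,
      d * (T.filter (fun π => π.natDegree = d)).card ≤ q ^ d - 1 := by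
    intro d hd
    rw [Finset.mem_Icc] at hd
    apply card_irred_le hd.1
    intro π hπ
    rw [Finset.mem_filter] at hπ
    obtain ⟨h1, h2, -, -, h5⟩ := hTmem π hπ.1
    exact ⟨h1, h2, hπ.2, h5⟩
  have harith := arith_main q b (by rw [hqF]; exact Nat.one_lt_two_pow (by omega))
    (by rcases Nat.lt_or_ge b 4 with h | h
        · right
          refine ⟨by omega, ?_⟩
          have hl2 : 2 ≤ l := by omega
          rw [hqF]
          calc (4:ℕ) = 2 ^ 2 := rfl
          _ ≤ 2 ^ l := Nat.pow_le_pow_right (by omega) hl2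
        · left; exact h)
    _ hbound
  rw [← hfib, hTcard, hcard, hqF, ← pow_mul] at harith
  have : 2 * 2 ^ (l * b - 1) = 2 ^ (l * b) := by
    rw [← pow_succ']
    congr 1
    have : 1 ≤ l * b := Nat.one_le_iff_ne_zero.mpr (by positivity)
    omega
  omega

lemma forward_special
    (S : Finset (Polynomial (GaloisField 2 1)))
    (hcard : S.card = 4)
    (hmem : ∀ p ∈ S, p.Monic ∧ p.natDegree = 3 ∧ p.coeff 0 ≠ 0)
    (hco : ∀ p ∈ S, ∀ q ∈ S, p ≠ q → IsCoprime p q) : False := by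
  classical
  set F := GaloisField 2 1 with hF
  haveI : Fintype F := Fintype.ofFinite F
  have hcF : Fintype.card F = 2 := by
    rw [← Nat.card_eq_fintype_card]; exact GaloisField.card 2 1 one_ne_zero
  have hF2 : (2 : F) = 0 := by
    have := CharP.cast_eq_zero F 2
    exact_mod_cast this
  have h2 : (2 : F[X]) = 0 := by
    have : ((2 : ℕ) : F[X]) = C ((2 : ℕ) : F) := (Polynomial.C_eq_natCast 2).symm
    push_cast at this
    rw [this, hF2, map_zero]
  -- every member has constant coefficient 1
  have hc0 : ∀ p ∈ S, p.coeff 0 = 1 := by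
    intro p hp
    have h0 := (hmem p hp).2.2
    have := FiniteField.pow_card_sub_one_eq_one (p.coeff 0) h0
    rw [hcF] at this
    simpa using this
  -- members are determined by coefficients 1 and 2
  have hdet : ∀ p ∈ S, ∀ p' ∈ S, p.coeff 1 = p'.coeff 1 → p.coeff 2 = p'.coeff 2 → p = p' := by
    intro p hp p' hp' e1 e2
    obtain ⟨hm, hd, -⟩ := hmem p hp
    obtain ⟨hm', hd', -⟩ := hmem p' hp'
    ext n
    by_cases hn : n < 4
    · interval_cases n
      · rw [hc0 p hp, hc0 p' hp']
      · exact e1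
      · exact e2
      · rw [show p.coeff 3 = 1 from by rw [← hd]; exact hm.coeff_natDegree,
          show p'.coeff 3 = 1 from by rw [← hd']; exact hm'.coeff_natDegree]
    · rw [coeff_eq_zero_of_natDegree_lt (by omega : p.natDegree < n),
        coeff_eq_zero_of_natDegree_lt (by omega : p'.natDegree < n)]
  -- the coefficient map is a bijection onto F × F
  set φ : F[X] → F × F := fun p => (p.coeff 1, p.coeff 2) with hφ
  have himg : S.image φ = Finset.univ := by
    apply Finset.eq_univ_of_card
    rw [Finset.card_image_of_injOn (fun p hp p' hp' he => by
      exact hdet p hp p' hp' (congrArg Prod.fst he) (congrArg Prod.snd he)), hcard]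
    rw [Fintype.card_prod, hcF]
  have hmemφ : ∀ v : F × F, ∃ p ∈ S, φ p = v := by
    intro v
    have : v ∈ S.image φ := by rw [himg]; exact Finset.mem_univ v
    obtain ⟨p, hp, he⟩ := Finset.mem_image.mp this
    exact ⟨p, hp, he⟩
  obtain ⟨p0, hp0, he0⟩ := hmemφ (0, 0)
  obtain ⟨p1, hp1, he1⟩ := hmemφ (1, 1)
  have hc01 : p0.coeff 1 = 0 := congrArg Prod.fst he0
  have hc02 : p0.coeff 2 = 0 := congrArg Prod.snd he0
  have hc11 : p1.coeff 1 = 1 := congrArg Prod.fst he1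
  have hc12 : p1.coeff 2 = 1 := congrArg Prod.snd he1
  have hne : p0 ≠ p1 := by
    intro h
    rw [h, hc11] at hc01
    exact one_ne_zero hc01
  -- identify p0 and p1
  have hp0eq : p0 = X ^ 3 + 1 := by
    obtain ⟨hm, hd, -⟩ := hmem p0 hp0
    ext n
    by_cases hn : n < 4
    · interval_cases n
      · simp [hc0 p0 hp0, coeff_one, coeff_X_pow]
      · simp [hc01, coeff_one, coeff_X_pow]
      · simp [hc02, coeff_one, coeff_X_pow]
      · rw [show p0.coeff 3 = 1 from by rw [← hd]; exact hm.coeff_natDegree]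
        simp [coeff_one, coeff_X_pow]
    · rw [coeff_eq_zero_of_natDegree_lt (by omega : p0.natDegree < n)]
      simp only [coeff_add, coeff_X_pow, coeff_one]
      rw [if_neg (by omega), if_neg (by omega)]
      simp
  have hp1eq : p1 = X ^ 3 + X ^ 2 + X + 1 := by
    obtain ⟨hm, hd, -⟩ := hmem p1 hp1
    ext n
    by_cases hn : n < 4
    · interval_cases n
      · simp [hc0 p1 hp1, coeff_one, coeff_X_pow]
      · simp [hc11, coeff_one, coeff_X_pow, coeff_X]
      · simp [hc12, coeff_one, coeff_X_pow, coeff_X]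
      · rw [show p1.coeff 3 = 1 from by rw [← hd]; exact hm.coeff_natDegree]
        simp [coeff_one, coeff_X_pow, coeff_X]
    · rw [coeff_eq_zero_of_natDegree_lt (by omega : p1.natDegree < n)]
      simp only [coeff_add, coeff_X_pow, coeff_one, coeff_X]
      rw [if_neg (by omega), if_neg (by omega), if_neg (by omega), if_neg (by omega)]
      simp
  -- X + 1 divides both
  have hdvd0 : (X + 1 : F[X]) ∣ p0 := by
    refine ⟨X ^ 2 + X + 1, ?_⟩
    rw [hp0eq]
    linear_combination (-(X ^ 2 + X) : F[X]) * h2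
  have hdvd1 : (X + 1 : F[X]) ∣ p1 := by
    refine ⟨X ^ 2 + 1, ?_⟩
    rw [hp1eq]
    ring
  have hu := (hco p0 hp0 p1 hp1 hne).isUnit_of_dvd' hdvd0 hdvd1
  have : (X + 1 : F[X]).natDegree = 1 := by
    rw [← C_1, natDegree_X_add_C]
  rw [Polynomial.natDegree_eq_zero_of_isUnit hu] at this
  exact zero_ne_one this

lemma construct_one (l : ℕ) (hl : 1 ≤ l) :
    ∃ S : Finset (Polynomial (GaloisField 2 l)),
        S.card = 2 ^ (l * 1 - 1) ∧
        (∀ p ∈ S, p.Monic ∧ p.natDegree = 1 ∧ p.coeff 0 ≠ 0) ∧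
        (∀ p ∈ S, ∀ q ∈ S, p ≠ q → IsCoprime p q) := by
  classical
  set F := GaloisField 2 l
  haveI : Fintype F := Fintype.ofFinite F
  have hcF : Fintype.card F = 2 ^ l := by
    rw [← Nat.card_eq_fintype_card]; exact GaloisField.card 2 l (by omega)
  have hcube : ((Finset.univ : Finset F).erase 0).card = 2 ^ l - 1 := by
    rw [Finset.card_erase_of_mem (Finset.mem_univ 0), Finset.card_univ, hcF]
  obtain ⟨A, hA, hAcard⟩ := Finset.exists_subset_card_eq (s := (Finset.univ : Finset F).erase 0)
    (n := 2 ^ (l - 1)) (by rw [hcube]; have h1 : 2^(l-1) < 2^l := Nat.pow_lt_pow_right one_lt_two (by omega); omega)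
  refine ⟨A.image (fun a => X + C a), ?_, ?_, ?_⟩
  · rw [Finset.card_image_of_injOn, hAcard]
    · congr 1; omega
    · intro a _ b _ he
      have := congrArg (fun p => Polynomial.coeff p 0) he
      simpa using this
  · intro p hp
    obtain ⟨a, ha, rfl⟩ := Finset.mem_image.mp hp
    have ha0 : a ≠ 0 := Finset.ne_of_mem_erase (hA ha)
    refine ⟨monic_X_add_C a, natDegree_X_add_C a, ?_⟩
    simpa using ha0
  · intro p hp p' hp' hne
    obtain ⟨a, ha, rfl⟩ := Finset.mem_image.mp hp
    obtain ⟨a', ha', rfl⟩ := Finset.mem_image.mp hp'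
    have : a ≠ a' := fun h => hne (by rw [h])
    exact coprime_linear this

section ConstructTwo
variable {F : Type*} [Field F]

lemma quad_lin_degree (a b : F) : (C a * X + C b).degree < ((2 : ℕ) : WithBot ℕ) := by
  apply lt_of_le_of_lt degree_linear_le
  exact_mod_cast (by norm_num : (1 : WithBot ℕ) < ((2 : ℕ) : WithBot ℕ))

lemma quad_monic (a b : F) : (X ^ 2 + C a * X + C b).Monic := by
  rw [add_assoc]
  exact monic_X_pow_add (quad_lin_degree a b)

lemma quad_natDegree (a b : F) : (X ^ 2 + C a * X + C b).natDegree = 2 := by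
  have hdeg : (X ^ 2 + C a * X + C b).degree = ((2 : ℕ) : WithBot ℕ) := by
    rw [add_assoc, degree_add_eq_left_of_degree_lt, degree_X_pow]
    rw [degree_X_pow]
    exact quad_lin_degree a b
  exact natDegree_eq_of_degree_eq_some hdeg

lemma quad_coeff_one (a b : F) : (X ^ 2 + C a * X + C b).coeff 1 = a := by
  simp [coeff_add, coeff_X_pow, coeff_C]

lemma quad_coeff_zero (a b : F) : (X ^ 2 + C a * X + C b).coeff 0 = b := by
  simp [coeff_add, coeff_X_pow, coeff_C]

lemma quad_eq (p : F[X]) (hm : p.Monic) (hd : p.natDegree = 2) :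
    p = X ^ 2 + C (p.coeff 1) * X + C (p.coeff 0) := by
  ext n
  by_cases hn : n < 3
  · interval_cases n
    · rw [quad_coeff_zero]
    · rw [quad_coeff_one]
    · rw [show p.coeff 2 = 1 from by rw [← hd]; exact hm.coeff_natDegree]
      simp [coeff_add, coeff_X_pow, coeff_C]
  · rw [coeff_eq_zero_of_natDegree_lt (by omega : p.natDegree < n),
      coeff_eq_zero_of_natDegree_lt (by rw [quad_natDegree]; omega)]

lemma irred_quad_coeff_zero {π : F[X]} (hi : Irreducible π) (hd : π.natDegree = 2) :
    π.coeff 0 ≠ 0 := by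
  intro h0
  obtain ⟨t, ht⟩ := X_dvd_iff.mpr h0
  have hπ0 : π ≠ 0 := fun h => by rw [h, natDegree_zero] at hd; omega
  have ht0 : t ≠ 0 := fun h => hπ0 (by rw [ht, h, mul_zero])
  have hdt : t.natDegree = 1 := by
    have := natDegree_mul (X_ne_zero (R := F)) ht0
    rw [← ht, hd, natDegree_X] at this
    omega
  rcases hi.isUnit_or_isUnit ht with h | h
  · have hX := natDegree_eq_zero_of_isUnit h
    rw [natDegree_X] at hX
    omega
  · rw [natDegree_eq_zero_of_isUnit h] at hdt
    omega

lemma sq_not_irred (a : F) : ¬ Irreducible ((X + C a) ^ 2) := by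
  intro hi
  rcases hi.isUnit_or_isUnit (sq (X + C a)) with h | h <;>
  · have h1 := natDegree_eq_zero_of_isUnit h
    rw [natDegree_X_add_C] at h1
    omega

end ConstructTwo

lemma construct_two (l : ℕ) (hl : 1 ≤ l) :
    ∃ S : Finset (Polynomial (GaloisField 2 l)),
        S.card = 2 ^ (l * 2 - 1) ∧
        (∀ p ∈ S, p.Monic ∧ p.natDegree = 2 ∧ p.coeff 0 ≠ 0) ∧
        (∀ p ∈ S, ∀ q ∈ S, p ≠ q → IsCoprime p q) := by
  classical
  set F := GaloisField 2 l with hFdef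
  haveI : Fintype F := Fintype.ofFinite F
  have hcF : Fintype.card F = 2 ^ l := by
    rw [← Nat.card_eq_fintype_card]; exact GaloisField.card 2 l (by omega)
  have hF2 : (2 : F) = 0 := by
    have := CharP.cast_eq_zero F 2
    exact_mod_cast this
  set h : ℕ := 2 ^ (l - 1) with hh
  have hq2h : 2 ^ l = 2 * h := by
    rw [hh, ← pow_succ']
    congr 1
    omega
  have hh1 : 1 ≤ h := Nat.one_le_two_pow
  -- the set of all monic quadratics
  set M : Finset F[X] :=
    (Finset.univ : Finset (F × F)).image (fun c => X ^ 2 + C c.1 * X + C c.2) with hM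
  have hMcard : M.card = 4 * h ^ 2 := by
    rw [hM, Finset.card_image_of_injOn, Finset.card_univ, Fintype.card_prod, hcF, hq2h]
    · ring
    · intro c _ c' _ he
      have h1 := congrArg (fun p => Polynomial.coeff p 1) he
      have h0 := congrArg (fun p => Polynomial.coeff p 0) he
      simp only [quad_coeff_one, quad_coeff_zero] at h1 h0
      exact Prod.ext h1 h0
  have hMmem : ∀ p ∈ M, p.Monic ∧ p.natDegree = 2 := by
    intro p hp
    obtain ⟨c, -, rfl⟩ := Finset.mem_image.mp hp
    exact ⟨quad_monic _ _, quad_natDegree _ _⟩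
  have hMmem' : ∀ p : F[X], p.Monic → p.natDegree = 2 → p ∈ M := by
    intro p hm hd
    rw [hM, Finset.mem_image]
    exact ⟨(p.coeff 1, p.coeff 0), Finset.mem_univ _, (quad_eq p hm hd).symm⟩
  -- the irreducible ones
  set I2 : Finset F[X] := M.filter (fun p => Irreducible p) with hI2
  have hI2mem : ∀ π ∈ I2, π.Monic ∧ Irreducible π ∧ π.natDegree = 2 ∧ π.coeff 0 ≠ 0 := by
    intro π hπ
    rw [hI2, Finset.mem_filter] at hπ
    obtain ⟨hm, hd⟩ := hMmem π hπ.1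
    exact ⟨hm, hπ.2, hd, irred_quad_coeff_zero hπ.2 hd⟩
  -- upper bound on the number of irreducible quadratics
  have hupper' : I2.card ≤ 2 * h ^ 2 - 1 := by
    have := card_irred_le (F := F) (d := 2) one_le_two I2 (fun π hπ => hI2mem π hπ)
    rw [hcF, hq2h] at this
    have e : (2 * h) ^ 2 = 4 * h ^ 2 := by ring
    rw [e] at this
    omega
  -- lower bound: reducible monic quadratics are products of two linear factors
  have hlower : 2 * h ^ 2 - h ≤ I2.card := by
    set R : Finset F[X] := (Finset.univ : Finset (Sym2 F)).image
      (Sym2.lift ⟨fun a b => (X + C a) * (X + C b), fun a b => mul_comm _ _⟩) with hR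
    have hsub : M \ R ⊆ I2 := by
      intro p hp
      rw [Finset.mem_sdiff] at hp
      obtain ⟨hpM, hpR⟩ := hp
      rw [hI2, Finset.mem_filter]
      refine ⟨hpM, ?_⟩
      by_contra hirr
      apply hpR
      obtain ⟨hm, hd⟩ := hMmem p hpM
      obtain ⟨c₁, c₂, hmul, hadd⟩ := (hm.not_irreducible_iff_exists_add_mul_eq_coeff hd).mp hirr
      rw [hR, Finset.mem_image]
      refine ⟨Sym2.mk c₁ c₂, Finset.mem_univ _, ?_⟩
      rw [Sym2.lift_mk]
      have he : p = X ^ 2 + C (c₁ + c₂) * X + C (c₁ * c₂) := by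
        rw [quad_eq p hm hd, hmul, hadd]
      rw [he]
      simp only [C_add, C_mul]
      ring
    have hRcard : R.card ≤ 2 * h ^ 2 + h := by
      apply le_trans (Finset.card_image_le.trans (le_of_eq (Finset.card_univ)))
      rw [Sym2.card, hcF, hq2h, Nat.choose_two_right, Nat.add_sub_cancel]
      have e1 : (2 * h + 1) * (2 * h) = 2 * ((2 * h + 1) * h) := by ring
      rw [e1, Nat.mul_div_cancel_left _ (by norm_num : 0 < 2)]
      apply le_of_eq
      ring
    have h1 : M.card - R.card ≤ (M \ R).card := Finset.le_card_sdiff R M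
    have h2 : (M \ R).card ≤ I2.card := Finset.card_le_card hsub
    rw [hMcard] at h1
    omega
  -- the extra squares
  set k : ℕ := 2 * h ^ 2 - I2.card with hk
  have hk1 : k ≤ h := by omega
  obtain ⟨A, hA, hAcard⟩ := Finset.exists_subset_card_eq
    (s := (Finset.univ : Finset F).erase 0) (n := k)
    (by rw [Finset.card_erase_of_mem (Finset.mem_univ 0), Finset.card_univ, hcF]; omega)
  set Sq : Finset F[X] := A.image (fun a => (X + C a) ^ 2) with hSq
  have hsqinj : ∀ a ∈ A, ∀ b ∈ A, (X + C a) ^ 2 = (X + C b) ^ 2 → a = b := by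
    intro a _ b _ he
    have hab : a ^ 2 = b ^ 2 := by
      have := congrArg (fun p => Polynomial.eval 0 p) he
      simpa using this
    have hs : a + b = 0 := by
      have hsq : (a + b) ^ 2 = 0 := by linear_combination hab + (a * b + b ^ 2) * hF2
      exact pow_eq_zero_iff two_ne_zero |>.mp hsq
    linear_combination hs - b * hF2
  have hSqcard : Sq.card = k := by
    rw [hSq, Finset.card_image_of_injOn (fun a ha b hb he => hsqinj a ha b hb he), hAcard]
  have hSqmem : ∀ p ∈ Sq, ∃ a : F, a ≠ 0 ∧ p = (X + C a) ^ 2 := by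
    intro p hp
    obtain ⟨a, ha, rfl⟩ := Finset.mem_image.mp hp
    exact ⟨a, Finset.ne_of_mem_erase (hA ha), rfl⟩
  have hdisj : Disjoint I2 Sq := by
    rw [Finset.disjoint_right]
    intro p hp hpI
    obtain ⟨a, -, rfl⟩ := hSqmem p hp
    exact sq_not_irred a (hI2mem _ hpI).2.1
  refine ⟨I2 ∪ Sq, ?_, ?_, ?_⟩
  · rw [Finset.card_union_of_disjoint hdisj, hSqcard]
    have : I2.card + k = 2 * h ^ 2 := by omega
    rw [this, hh, ← pow_mul, ← pow_succ']
    congr 1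
    omega
  · intro p hp
    rcases Finset.mem_union.mp hp with hp | hp
    · obtain ⟨hm, -, hd, h0⟩ := hI2mem p hp
      exact ⟨hm, hd, h0⟩
    · obtain ⟨a, ha, rfl⟩ := hSqmem p hp
      refine ⟨(monic_X_add_C a).pow _, ?_, ?_⟩
      · rw [natDegree_pow, natDegree_X_add_C]
      · rw [coeff_zero_eq_eval_zero]
        simpa using pow_ne_zero 2 ha
  · intro p hp p' hp' hne
    have hlin : ∀ (π : F[X]) (a : F), π ∈ I2 → IsCoprime π (X + C a) := by
      intro π a hπ
      obtain ⟨hm, hi, hd, -⟩ := hI2mem π hπ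
      refine coprime_of_monic_irred hm (monic_X_add_C a) hi
        (irreducible_of_degree_eq_one (degree_X_add_C a)) ?_
      intro he
      rw [he, natDegree_X_add_C] at hd
      omega
    rcases Finset.mem_union.mp hp with hp1 | hp1 <;>
      rcases Finset.mem_union.mp hp' with hp2 | hp2
    · obtain ⟨hm, hi, -, -⟩ := hI2mem p hp1
      obtain ⟨hm', hi', -, -⟩ := hI2mem p' hp2
      exact coprime_of_monic_irred hm hm' hi hi' hne
    · obtain ⟨a, -, rfl⟩ := hSqmem p' hp2
      exact (hlin p a hp1).pow_right
    · obtain ⟨a, -, rfl⟩ := hSqmem p hp1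
      exact ((hlin p' a hp2).pow_right).symm
    · obtain ⟨a, -, rfl⟩ := hSqmem p hp1
      obtain ⟨b, -, rfl⟩ := hSqmem p' hp2
      have hab : a ≠ b := fun he => hne (by rw [he])
      exact (coprime_linear hab).pow


/-- Over `F = GaloisField 2 l` (with `m = l*b`), a family of `2^(m-1)` pairwise
coprime monic polynomials of natural degree `b` with nonzero constant term
exists iff `b = 1` or `b = 2`. -/
theorem exists_coprime_family_iff_deg_one_or_two (l b : ℕ) (hl : 1 ≤ l) (hb : 1 ≤ b) :
    (∃ S : Finset (Polynomial (GaloisField 2 l)),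
        S.card = 2 ^ (l * b - 1) ∧
        (∀ p ∈ S, p.Monic ∧ p.natDegree = b ∧ p.coeff 0 ≠ 0) ∧
        (∀ p ∈ S, ∀ q ∈ S, p ≠ q → IsCoprime p q)) ↔
      b = 1 ∨ b = 2 := by
  constructor
  · rintro ⟨S, hcard, hmem, hco⟩
    by_contra hcon
    push_neg at hcon
    have hb3 : 3 ≤ b := by omega
    by_cases hsp : l = 1 ∧ b = 3
    · obtain ⟨rfl, rfl⟩ := hsp
      exact forward_special S (by norm_num at hcard ⊢; exact hcard) hmem hco
    · exact forward_generic l b hl hb3 hsp S hcard hmem hco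
  · rintro (rfl | rfl)
    · exact construct_one l hl
    · exact construct_two l hl
end
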